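/- arXiv:1207.7153 — 3 statements merged into one kernel-verified Lean document; each statement's English description precedes it below -/
import Mathlib

section
/- For I = (xy, xF, yF) defining a nearly-complete intersection and r ≥ 1, the ordinary power I^r equals the K-span of {x^a y^b z^c F^d : a, b, c, d ≥ 0, c < n, min(a,b)+d ≥ r, a+b+d ≥ 2r, a+b ≥ r}. -/
open MvPolynomial

section Aux
variable {K : Type*} [Field K]

lemma mul_span_le' {R : Type*} [CommRing R] [Algebra K R] (h : R) (s : Set R)
    (T : Submodule K R) (hs : ∀ g ∈ s, h * g ∈ T) :
    ∀ r ∈ Submodule.span K s, h * r ∈ T := by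
  intro r hr
  induction hr using Submodule.span_induction with
  | mem g hg => exact hs g hg
  | zero => simp
  | add x y _ _ ihx ihy => rw [mul_add]; exact T.add_mem ihx ihy
  | smul a x _ ih => rw [mul_smul_comm]; exact T.smul_mem a ih

/-- the generating set -/
def genSet (n : ℕ) (F : MvPolynomial (Fin 3) K) (m : ℕ) : Set (MvPolynomial (Fin 3) K) :=
  {g : MvPolynomial (Fin 3) K | ∃ p q s d : ℕ, s < n ∧
    min p q + d ≥ m ∧ p + q + d ≥ 2 * m ∧ p + q ≥ m ∧
    g = X 0 ^ p * X 1 ^ q * X 2 ^ s * F ^ d}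

lemma prod_sub_pow_mem (v : Fin 3) {ι : Type*} [DecidableEq ι] (t : Finset ι) (β : ι → K) :
    (∏ i ∈ t, (X 2 - C (β i) * X v)) - X 2 ^ t.card ∈
      Submodule.span K {g : MvPolynomial (Fin 3) K |
        ∃ e f : ℕ, 1 ≤ e ∧ e + f = t.card ∧ g = X v ^ e * X 2 ^ f} := by
  induction t using Finset.induction_on with
  | empty => simp
  | @insert i t hi ih =>
    rw [Finset.prod_insert hi, Finset.card_insert_of_notMem hi]
    set c := t.card with hc
    set T := Submodule.span K {g : MvPolynomial (Fin 3) K |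
        ∃ e f : ℕ, 1 ≤ e ∧ e + f = c + 1 ∧ g = X v ^ e * X 2 ^ f} with hT
    have h1 : X 2 * ((∏ i ∈ t, (X 2 - C (β i) * X v)) - X 2 ^ c) ∈ T := by
      refine mul_span_le' _ _ _ ?_ _ ih
      rintro g ⟨e, f, he, hef, rfl⟩
      refine Submodule.subset_span ⟨e, f + 1, he, by omega, by ring⟩
    have h2 : C (β i) * (X v * X 2 ^ c) ∈ T := by
      rw [← smul_eq_C_mul]
      exact T.smul_mem _ (Submodule.subset_span ⟨1, c, le_refl 1, by omega, by ring⟩)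
    have h3 : C (β i) * (X v * ((∏ i ∈ t, (X 2 - C (β i) * X v)) - X 2 ^ c)) ∈ T := by
      rw [← smul_eq_C_mul]
      refine T.smul_mem _ (mul_span_le' _ _ _ ?_ _ ih)
      rintro g ⟨e, f, he, hef, rfl⟩
      refine Submodule.subset_span ⟨e + 1, f, by omega, by omega, by ring⟩
    have key : (X 2 - C (β i) * X v) * (∏ i ∈ t, (X 2 - C (β i) * X v)) - X 2 ^ (c + 1)
        = X 2 * ((∏ i ∈ t, (X 2 - C (β i) * X v)) - X 2 ^ c)
          - C (β i) * (X v * X 2 ^ c)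
          - C (β i) * (X v * ((∏ i ∈ t, (X 2 - C (β i) * X v)) - X 2 ^ c)) := by
      ring
    rw [key]
    exact T.sub_mem (T.sub_mem h1 h2) h3

lemma zn_decomp (n : ℕ) (a b : Fin n → K) (F : MvPolynomial (Fin 3) K)
    (hF : F = X 2 ^ n - ∏ i : Fin n, (X 2 - MvPolynomial.C (b i) * X 0)
        - ∏ i : Fin n, (X 2 - MvPolynomial.C (a i) * X 1)) :
    ∃ R₁ ∈ Submodule.span K {g : MvPolynomial (Fin 3) K |
        ∃ e f : ℕ, 1 ≤ e ∧ e + f = n ∧ g = X 0 ^ e * X 2 ^ f},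
      ∃ R₂ ∈ Submodule.span K {g : MvPolynomial (Fin 3) K |
        ∃ e f : ℕ, 1 ≤ e ∧ e + f = n ∧ g = X 1 ^ e * X 2 ^ f},
      (X 2 : MvPolynomial (Fin 3) K) ^ n = -F - R₁ - R₂ := by
  have hcard : (Finset.univ : Finset (Fin n)).card = n := by simp
  refine ⟨(∏ i : Fin n, (X 2 - C (b i) * X 0)) - X 2 ^ n, ?_,
    (∏ i : Fin n, (X 2 - C (a i) * X 1)) - X 2 ^ n, ?_, ?_⟩
  · have := prod_sub_pow_mem 0 (Finset.univ : Finset (Fin n)) b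
    rwa [hcard] at this
  · have := prod_sub_pow_mem 1 (Finset.univ : Finset (Fin n)) a
    rwa [hcard] at this
  · rw [hF]; ring

lemma keyL (n : ℕ) (hn : 1 ≤ n) (a b : Fin n → K) (F : MvPolynomial (Fin 3) K)
    (hF : F = X 2 ^ n - ∏ i : Fin n, (X 2 - MvPolynomial.C (b i) * X 0)
        - ∏ i : Fin n, (X 2 - MvPolynomial.C (a i) * X 1)) (m : ℕ) :
    ∀ c p q d : ℕ, m ≤ min p q + d → 2 * m ≤ p + q + d → m ≤ p + q →
      X 0 ^ p * X 1 ^ q * X 2 ^ c * F ^ d ∈ Submodule.span K (genSet n F m) := by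
  intro c
  induction c using Nat.strong_induction_on with
  | _ c ih =>
  intro p q d h1 h2 h3
  by_cases hc : c < n
  · exact Submodule.subset_span ⟨p, q, c, d, hc, h1, h2, h3, rfl⟩
  · push_neg at hc
    obtain ⟨R₁, hR₁, R₂, hR₂, hzn⟩ := zn_decomp n a b F hF
    have hz : (X 2 : MvPolynomial (Fin 3) K) ^ c = X 2 ^ (c - n) * (-F - R₁ - R₂) := by
      rw [← hzn, ← pow_add]; congr 1; omega
    have key : X 0 ^ p * X 1 ^ q * X 2 ^ c * F ^ d
        = -(X 0 ^ p * X 1 ^ q * X 2 ^ (c - n) * F ^ (d + 1))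
          - (X 0 ^ p * X 1 ^ q * X 2 ^ (c - n) * F ^ d) * R₁
          - (X 0 ^ p * X 1 ^ q * X 2 ^ (c - n) * F ^ d) * R₂ := by
      rw [hz]; ring
    rw [key]
    set T := Submodule.span K (genSet n F m (K := K)) with hTdef
    refine T.sub_mem (T.sub_mem (T.neg_mem ?_) ?_) ?_
    · exact ih (c - n) (by omega) p q (d + 1) (by omega) (by omega) h3
    · refine mul_span_le' _ _ _ ?_ _ hR₁
      rintro g ⟨e, f, he, hef, rfl⟩
      have heq : X 0 ^ p * X 1 ^ q * X 2 ^ (c - n) * F ^ d * (X 0 ^ e * X 2 ^ f)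
          = X 0 ^ (p + e) * X 1 ^ q * X 2 ^ (c - n + f) * F ^ d := by
        rw [pow_add, pow_add]; ring
      rw [heq]
      exact ih (c - n + f) (by omega) (p + e) q d (by omega) (by omega) (by omega)
    · refine mul_span_le' _ _ _ ?_ _ hR₂
      rintro g ⟨e, f, he, hef, rfl⟩
      have heq : X 0 ^ p * X 1 ^ q * X 2 ^ (c - n) * F ^ d * (X 1 ^ e * X 2 ^ f)
          = X 0 ^ p * X 1 ^ (q + e) * X 2 ^ (c - n + f) * F ^ d := by
        rw [pow_add, pow_add]; ring
      rw [heq]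
      exact ih (c - n + f) (by omega) p (q + e) d (by omega) (by omega) (by omega)

lemma smul_closure (n : ℕ) (hn : 1 ≤ n) (a b : Fin n → K) (F : MvPolynomial (Fin 3) K)
    (hF : F = X 2 ^ n - ∏ i : Fin n, (X 2 - MvPolynomial.C (b i) * X 0)
        - ∏ i : Fin n, (X 2 - MvPolynomial.C (a i) * X 1)) (m : ℕ) :
    ∀ h x : MvPolynomial (Fin 3) K, x ∈ Submodule.span K (genSet n F m) →
      h * x ∈ Submodule.span K (genSet n F m) := by
  intro h
  induction h using MvPolynomial.induction_on with
  | C a' =>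
    intro x hx; rw [← smul_eq_C_mul]; exact Submodule.smul_mem _ _ hx
  | add p q ihp ihq =>
    intro x hx; rw [add_mul]; exact Submodule.add_mem _ (ihp x hx) (ihq x hx)
  | mul_X p i ih =>
    intro x hx
    have hx' : X i * x ∈ Submodule.span K (genSet n F m (K := K)) := by
      refine mul_span_le' _ _ _ ?_ x hx
      rintro g ⟨p', q', s', d', hs, h1, h2, h3, rfl⟩
      fin_cases i
      · show X 0 * (X 0 ^ p' * X 1 ^ q' * X 2 ^ s' * F ^ d') ∈ _
        have heq : X 0 * (X 0 ^ p' * X 1 ^ q' * X 2 ^ s' * F ^ d')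
            = X 0 ^ (p' + 1) * X 1 ^ q' * X 2 ^ s' * F ^ d' := by ring
        rw [heq]
        exact keyL n hn a b F hF m s' (p' + 1) q' d' (by omega) (by omega) (by omega)
      · show X 1 * (X 0 ^ p' * X 1 ^ q' * X 2 ^ s' * F ^ d') ∈ _
        have heq : X 1 * (X 0 ^ p' * X 1 ^ q' * X 2 ^ s' * F ^ d')
            = X 0 ^ p' * X 1 ^ (q' + 1) * X 2 ^ s' * F ^ d' := by ring
        rw [heq]
        exact keyL n hn a b F hF m s' p' (q' + 1) d' (by omega) (by omega) (by omega)
      · show X 2 * (X 0 ^ p' * X 1 ^ q' * X 2 ^ s' * F ^ d') ∈ _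
        have heq : X 2 * (X 0 ^ p' * X 1 ^ q' * X 2 ^ s' * F ^ d')
            = X 0 ^ p' * X 1 ^ q' * X 2 ^ (s' + 1) * F ^ d' := by ring
        rw [heq]
        exact keyL n hn a b F hF m (s' + 1) p' q' d' h1 h2 h3
    have heq : p * X i * x = p * (X i * x) := by ring
    rw [heq]
    exact ih _ hx'


lemma step_mul (n : ℕ) (hn : 1 ≤ n) (a b : Fin n → K) (F : MvPolynomial (Fin 3) K)
    (hF : F = X 2 ^ n - ∏ i : Fin n, (X 2 - MvPolynomial.C (b i) * X 0)
        - ∏ i : Fin n, (X 2 - MvPolynomial.C (a i) * X 1))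
    (I : Ideal (MvPolynomial (Fin 3) K))
    (hI : I = Ideal.span {X 0 * X 1, X 0 * F, X 1 * F}) (m : ℕ) :
    ∀ h ∈ I, ∀ x ∈ Submodule.span K (genSet n F m),
      h * x ∈ Submodule.span K (genSet n F (m + 1)) := by
  intro h hh
  rw [hI] at hh
  induction hh using Submodule.span_induction with
  | mem g hg =>
    intro x hx
    refine mul_span_le' _ _ _ ?_ x hx
    rintro g' ⟨p, q, s, d, hs, h1, h2, h3, rfl⟩
    simp only [Set.mem_insert_iff, Set.mem_singleton_iff] at hg
    rcases hg with rfl | rfl | rfl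
    · have heq : X 0 * X 1 * (X 0 ^ p * X 1 ^ q * X 2 ^ s * F ^ d)
          = X 0 ^ (p + 1) * X 1 ^ (q + 1) * X 2 ^ s * F ^ d := by ring
      rw [heq]
      exact Submodule.subset_span ⟨p + 1, q + 1, s, d, hs, by omega, by omega, by omega, rfl⟩
    · have heq : X 0 * F * (X 0 ^ p * X 1 ^ q * X 2 ^ s * F ^ d)
          = X 0 ^ (p + 1) * X 1 ^ q * X 2 ^ s * F ^ (d + 1) := by ring
      rw [heq]
      exact Submodule.subset_span ⟨p + 1, q, s, d + 1, hs, by omega, by omega, by omega, rfl⟩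
    · have heq : X 1 * F * (X 0 ^ p * X 1 ^ q * X 2 ^ s * F ^ d)
          = X 0 ^ p * X 1 ^ (q + 1) * X 2 ^ s * F ^ (d + 1) := by ring
      rw [heq]
      exact Submodule.subset_span ⟨p, q + 1, s, d + 1, hs, by omega, by omega, by omega, rfl⟩
  | zero => intro x hx; rw [zero_mul]; exact Submodule.zero_mem _
  | add f g _ _ ihf ihg =>
    intro x hx; rw [add_mul]; exact Submodule.add_mem _ (ihf x hx) (ihg x hx)
  | smul r f _ ih =>
    intro x hx
    rw [smul_eq_mul, mul_assoc]
    exact smul_closure n hn a b F hF (m + 1) r _ (ih x hx)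

lemma pow_le_span (n : ℕ) (hn : 1 ≤ n) (a b : Fin n → K) (F : MvPolynomial (Fin 3) K)
    (hF : F = X 2 ^ n - ∏ i : Fin n, (X 2 - MvPolynomial.C (b i) * X 0)
        - ∏ i : Fin n, (X 2 - MvPolynomial.C (a i) * X 1))
    (I : Ideal (MvPolynomial (Fin 3) K))
    (hI : I = Ideal.span {X 0 * X 1, X 0 * F, X 1 * F}) :
    ∀ m : ℕ, 1 ≤ m → ∀ x ∈ I ^ m, x ∈ Submodule.span K (genSet n F m) := by
  intro m
  induction m with
  | zero => omega
  | succ m ih =>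
    intro _ x hx
    rcases Nat.eq_zero_or_pos m with rfl | hm
    · rw [pow_one, hI] at hx
      induction hx using Submodule.span_induction with
      | mem g hg =>
        simp only [Set.mem_insert_iff, Set.mem_singleton_iff] at hg
        rcases hg with rfl | rfl | rfl
        · have heq : X 0 * X 1 = (X 0 : MvPolynomial (Fin 3) K) ^ 1 * X 1 ^ 1 * X 2 ^ 0 * F ^ 0 := by
            ring
          rw [heq]
          exact Submodule.subset_span ⟨1, 1, 0, 0, hn, by omega, by omega, by omega, rfl⟩
        · have heq : X 0 * F = (X 0 : MvPolynomial (Fin 3) K) ^ 1 * X 1 ^ 0 * X 2 ^ 0 * F ^ 1 := by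
            ring
          rw [heq]
          exact Submodule.subset_span ⟨1, 0, 0, 1, hn, by omega, by omega, by omega, rfl⟩
        · have heq : X 1 * F = (X 0 : MvPolynomial (Fin 3) K) ^ 0 * X 1 ^ 1 * X 2 ^ 0 * F ^ 1 := by
            ring
          rw [heq]
          exact Submodule.subset_span ⟨0, 1, 0, 1, hn, by omega, by omega, by omega, rfl⟩
      | zero => exact Submodule.zero_mem _
      | add f g _ _ ihf ihg => exact Submodule.add_mem _ ihf ihg
      | smul r f _ ihf =>
        rw [smul_eq_mul]
        exact smul_closure n hn a b F hF 1 r f ihf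
    · rw [pow_succ, mul_comm] at hx
      refine Submodule.mul_induction_on hx ?_ ?_
      · intro h hh y hy
        exact step_mul n hn a b F hF I hI m h hh y (ih hm y hy)
      · intro y z hy hz
        exact Submodule.add_mem _ hy hz

lemma genSet_subset_pow (n : ℕ) (hn : 1 ≤ n) (F : MvPolynomial (Fin 3) K)
    (I : Ideal (MvPolynomial (Fin 3) K))
    (hI : I = Ideal.span {X 0 * X 1, X 0 * F, X 1 * F}) (m : ℕ) :
    ∀ g ∈ genSet n F m, g ∈ I ^ m := by
  rintro g ⟨p, q, s, d, hs, h1, h2, h3, rfl⟩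
  set t := min m d with ht
  set i := m - t with hi
  set j := min (p - i) t with hj
  set k := t - j with hk
  have hij : i + j ≤ p := by omega
  have hik : i + k ≤ q := by omega
  have hjk : j + k ≤ d := by omega
  have hsum : i + j + k = m := by omega
  obtain ⟨p', hp'⟩ : ∃ p', p = p' + (i + j) := ⟨p - (i + j), by omega⟩
  obtain ⟨q', hq'⟩ : ∃ q', q = q' + (i + k) := ⟨q - (i + k), by omega⟩
  obtain ⟨d', hd'⟩ : ∃ d', d = d' + (j + k) := ⟨d - (j + k), by omega⟩
  have hxy : X 0 * X 1 ∈ I := by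
    rw [hI]; exact Ideal.subset_span (by simp)
  have hxF : X 0 * F ∈ I := by
    rw [hI]; exact Ideal.subset_span (by simp)
  have hyF : X 1 * F ∈ I := by
    rw [hI]; exact Ideal.subset_span (by simp)
  have hmem : (X 0 * X 1) ^ i * ((X 0 * F) ^ j * (X 1 * F) ^ k) ∈ I ^ m := by
    have h1 : (X 0 * X 1) ^ i * ((X 0 * F) ^ j * (X 1 * F) ^ k) ∈ I ^ i * (I ^ j * I ^ k) :=
      Ideal.mul_mem_mul (Ideal.pow_mem_pow hxy i)
        (Ideal.mul_mem_mul (Ideal.pow_mem_pow hxF j) (Ideal.pow_mem_pow hyF k))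
    have h2 : I ^ i * (I ^ j * I ^ k) = I ^ m := by
      rw [← pow_add, ← pow_add]; congr 1; omega
    rwa [h2] at h1
  have heq : X 0 ^ p * X 1 ^ q * X 2 ^ s * F ^ d
      = (X 0 ^ p' * X 1 ^ q' * X 2 ^ s * F ^ d') *
        ((X 0 * X 1) ^ i * ((X 0 * F) ^ j * (X 1 * F) ^ k)) := by
    rw [hp', hq', hd']; ring
  rw [heq]
  exact Ideal.mul_mem_left _ _ hmem

end Aux

theorem stmt_16 {K : Type*} [Field K] (n : ℕ) (hn : 1 ≤ n)
    (a b : Fin n → K)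
    (F : MvPolynomial (Fin 3) K)
    (hF : F = X 2 ^ n - ∏ i : Fin n, (X 2 - MvPolynomial.C (b i) * X 0)
        - ∏ i : Fin n, (X 2 - MvPolynomial.C (a i) * X 1))
    (I : Ideal (MvPolynomial (Fin 3) K))
    (hI : I = Ideal.span {X 0 * X 1, X 0 * F, X 1 * F})
    (r : ℕ) (hr : 1 ≤ r) :
    (↑(I ^ r) : Set (MvPolynomial (Fin 3) K)) =
      ↑(Submodule.span K
        {g : MvPolynomial (Fin 3) K | ∃ p q s d : ℕ, s < n ∧
          min p q + d ≥ r ∧ p + q + d ≥ 2 * r ∧ p + q ≥ r ∧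
          g = X 0 ^ p * X 1 ^ q * X 2 ^ s * F ^ d}) := by
  ext x
  simp only [SetLike.mem_coe]
  constructor
  · intro hx
    exact pow_le_span n hn a b F hF I hI r hr x hx
  · intro hx
    have hx' : x ∈ Submodule.span K (genSet n F r) := hx
    clear hx
    induction hx' using Submodule.span_induction with
    | mem g hg => exact genSet_subset_pow n hn F I hI r g hg
    | zero => exact Submodule.zero_mem _
    | add f g _ _ ihf ihg => exact Submodule.add_mem _ ihf ihg
    | smul c f _ ihf =>
      rw [smul_eq_C_mul]
      exact Ideal.mul_mem_left _ _ ihf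
end

section
/- For the ideal I of a nearly-complete intersection of 2n+1 points, I^(m) ⊆ I^r if and only if 4r ≤ 3m + 1; consequently the resurgence ρ(I) = sup{m/r : I^(m) ⊄ I^r} equals 4/3. -/
open MvPolynomial

noncomputable section
namespace NCI

section generic
variable {A : Type*} [CommRing A]

lemma span_pair_pow (p q : A) (m : ℕ) :
    (Ideal.span {p, q}) ^ m = Ideal.span {g | ∃ k ≤ m, g = p ^ k * q ^ (m - k)} := by
  induction m with
  | zero =>
      have h1 : Ideal.span {g : A | ∃ k ≤ 0, g = p ^ k * q ^ (0 - k)} = ⊤ :=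
        Ideal.eq_top_iff_one _ |>.2 (Ideal.subset_span ⟨0, le_refl _, by simp⟩)
      rw [pow_zero, h1, Ideal.one_eq_top]
  | succ m ih =>
      rw [pow_succ, mul_comm, ih, Ideal.span_mul_span']
      apply le_antisymm <;> rw [Ideal.span_le] <;> rintro g hg
      · rcases hg with ⟨v, hv, w, hw, hvw⟩
        rcases hw with ⟨k, hk, hw⟩
        simp only [Set.mem_insert_iff, Set.mem_singleton_iff] at hv
        apply Ideal.subset_span
        rcases hv with hv | hv
        · refine ⟨k + 1, by omega, ?_⟩
          have h3 : m + 1 - (k+1) = m - k := by omega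
          rw [← hvw, hv, hw, h3]
          show p * (p ^ k * q ^ (m - k)) = p ^ (k + 1) * q ^ (m - k)
          ring
        · refine ⟨k, by omega, ?_⟩
          have h3 : m + 1 - k = (m - k) + 1 := by omega
          rw [← hvw, hv, hw, h3]
          show q * (p ^ k * q ^ (m - k)) = p ^ k * q ^ (m - k + 1)
          ring
      · rcases hg with ⟨k, hk, rfl⟩
        rcases Nat.eq_zero_or_pos k with rfl | hkpos
        · apply Ideal.subset_span
          refine ⟨q, by simp, q ^ m, ⟨0, by omega, by simp⟩, ?_⟩
          show q * q ^ m = p ^ 0 * q ^ (m + 1 - 0)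
          have h0 : m + 1 - 0 = m + 1 := by omega
          rw [h0, pow_zero, one_mul]
          ring
        · apply Ideal.subset_span
          refine ⟨p, by simp, p ^ (k-1) * q ^ (m - (k-1)), ⟨k-1, by omega, rfl⟩, ?_⟩
          show p * (p ^ (k-1) * q ^ (m - (k-1))) = p ^ k * q ^ (m + 1 - k)
          have h1 : m - (k-1) = m + 1 - k := by omega
          have h2 : p * p ^ (k-1) = p ^ k := by
            rw [← pow_succ']
            congr 1
            omega
          rw [h1, ← mul_assoc, h2]

lemma mem_span_pair_pow {p q g : A} {m : ℕ}
    (hg : g ∈ (Ideal.span {p, q}) ^ m) :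
    ∃ c : ℕ → A, g = ∑ k ∈ Finset.range (m+1), c k * (p ^ k * q ^ (m - k)) := by
  rw [span_pair_pow] at hg
  have hset : {g | ∃ k ≤ m, g = p ^ k * q ^ (m - k)} =
      Set.range (fun k : Fin (m+1) => p ^ (k : ℕ) * q ^ (m - (k : ℕ))) := by
    ext v
    constructor
    · rintro ⟨k, hk, rfl⟩; exact ⟨⟨k, by omega⟩, rfl⟩
    · rintro ⟨k, rfl⟩; exact ⟨(k : ℕ), by omega, rfl⟩
  rw [hset, Ideal.mem_span_range_iff_exists_fun] at hg
  rcases hg with ⟨c, hc⟩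
  refine ⟨fun k => if h : k < m + 1 then c ⟨k, h⟩ else 0, ?_⟩
  rw [← hc, Finset.sum_range fun k => _]
  apply Finset.sum_congr rfl
  intro i _
  simp
  intro h
  exact absurd i.isLt (by omega)

end generic

variable {K : Type*} [Field K]

local notation "R3" => MvPolynomial (Fin 3) K

/-- weight of an exponent vector -/
def wt (w : Fin 3 → ℕ) (d : Fin 3 →₀ ℕ) : ℕ := Finsupp.weight w d

lemma wt_add (w : Fin 3 → ℕ) (d e : Fin 3 →₀ ℕ) : wt w (d + e) = wt w d + wt w e := by
  simp [wt]

lemma wt_apply (w : Fin 3 → ℕ) (d : Fin 3 →₀ ℕ) :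
    wt w d = d 0 * w 0 + d 1 * w 1 + d 2 * w 2 := by
  rw [wt, Finsupp.weight_apply, Finsupp.sum_fintype]
  · simp [Fin.sum_univ_three, smul_eq_mul, mul_comm]
  · intro i; simp

lemma wt_single (w : Fin 3 → ℕ) (i : Fin 3) (k : ℕ) :
    wt w (Finsupp.single i k) = k * w i := by
  fin_cases i <;> simp [wt_apply, Finsupp.single_apply]

/-- The ideal of polynomials all of whose monomials have weight at least `s`. -/
def lowIdeal (w : Fin 3 → ℕ) (s : ℕ) : Ideal R3 where
  carrier := {f | ∀ d ∈ f.support, s ≤ wt w d}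
  add_mem' := by
    intro f g hf hg d hd
    rcases Finset.mem_union.1 (MvPolynomial.support_add hd) with h | h
    · exact hf d h
    · exact hg d h
  zero_mem' := by intro d hd; simp at hd
  smul_mem' := by
    intro c f hf d hd
    rw [smul_eq_mul] at hd
    rcases Finset.mem_add.1 (MvPolynomial.support_mul c f hd) with ⟨a, ha, e, he, rfl⟩
    have h1 := hf e he
    rw [wt_add]; omega

lemma mem_lowIdeal {w : Fin 3 → ℕ} {s : ℕ} {f : R3} :
    f ∈ lowIdeal w s ↔ ∀ d ∈ f.support, s ≤ wt w d := Iff.rfl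

lemma lowIdeal_zero_top (w : Fin 3 → ℕ) (f : R3) : f ∈ lowIdeal w 0 := by
  intro d _
  exact Nat.zero_le _

lemma lowIdeal_mono (w : Fin 3 → ℕ) {s t : ℕ} (h : s ≤ t) :
    (lowIdeal w t : Ideal R3) ≤ lowIdeal w s := by
  intro f hf d hd
  exact le_trans h (hf d hd)

lemma lowIdeal_mul (w : Fin 3 → ℕ) (s t : ℕ) :
    (lowIdeal w s : Ideal R3) * lowIdeal w t ≤ lowIdeal w (s + t) := by
  rw [Ideal.mul_le]
  intro f hf g hg d hd
  rcases Finset.mem_add.1 (MvPolynomial.support_mul f g hd) with ⟨a, ha, e, he, rfl⟩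
  rw [wt_add]
  exact add_le_add (hf a ha) (hg e he)

lemma lowIdeal_pow (w : Fin 3 → ℕ) (s k : ℕ) :
    (lowIdeal w s : Ideal R3) ^ k ≤ lowIdeal w (k * s) := by
  induction k with
  | zero =>
      rw [pow_zero, Nat.zero_mul]
      intro f _ d _
      exact Nat.zero_le _
  | succ k ih =>
      calc (lowIdeal w s : Ideal R3) ^ (k+1) = lowIdeal w s ^ k * lowIdeal w s := pow_succ _ _
      _ ≤ lowIdeal w (k * s) * lowIdeal w s := Ideal.mul_mono_left ih
      _ ≤ lowIdeal w (k * s + s) := lowIdeal_mul w _ _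
      _ = lowIdeal w ((k+1) * s) := by ring_nf

lemma X_mem_lowIdeal (w : Fin 3 → ℕ) (i : Fin 3) (s : ℕ) (h : s ≤ w i) :
    (X i : R3) ∈ lowIdeal w s := by
  intro d hd
  rw [MvPolynomial.support_X] at hd
  simp only [Finset.mem_singleton] at hd
  subst hd
  rw [wt_single]; omega


/-- the (x,y)-weight -/
def wxy : Fin 3 → ℕ := ![1,1,0]

lemma monomial_eq_prod (d : Fin 3 →₀ ℕ) (c : K) :
    (monomial d c : R3) = C c * X 0 ^ (d 0) * X 1 ^ (d 1) * X 2 ^ (d 2) := by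
  rw [MvPolynomial.monomial_eq]
  rw [Finsupp.prod_fintype]
  · rw [Fin.prod_univ_three]; ring
  · intro i; simp

lemma XY_pow_mem (α β s : ℕ) (h : s ≤ α + β) :
    (X 0 : R3) ^ α * X 1 ^ β ∈ Ideal.span {X 0, X 1} ^ s := by
  have h0 : (X 0 : R3) ∈ Ideal.span {X 0, X 1} :=
    Ideal.subset_span (by simp)
  have h1 : (X 1 : R3) ∈ Ideal.span {X 0, X 1} :=
    Ideal.subset_span (by simp)
  have : (X 0 : R3) ^ α * X 1 ^ β ∈ Ideal.span {X 0, X 1} ^ (α + β) := by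
    rw [pow_add]
    exact Ideal.mul_mem_mul (Ideal.pow_mem_pow h0 α) (Ideal.pow_mem_pow h1 β)
  exact Ideal.pow_le_pow_right h this

lemma W_eq (s : ℕ) :
    (Ideal.span {X 0, X 1} : Ideal R3) ^ s = lowIdeal wxy s := by
  apply le_antisymm
  · induction s with
    | zero =>
        rw [pow_zero]
        intro f _
        rw [mem_lowIdeal]; intro d _; exact Nat.zero_le _
    | succ s ih =>
        calc (Ideal.span {X 0, X 1} : Ideal R3) ^ (s+1)
            = Ideal.span {X 0, X 1} ^ s * Ideal.span {X 0, X 1} := pow_succ _ _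
          _ ≤ lowIdeal wxy s * lowIdeal wxy 1 := by
              apply Ideal.mul_mono ih
              rw [Ideal.span_le]
              rintro p hp
              simp only [Set.mem_insert_iff, Set.mem_singleton_iff] at hp
              rcases hp with rfl | rfl
              · exact X_mem_lowIdeal wxy 0 1 (by norm_num [wxy])
              · exact X_mem_lowIdeal wxy 1 1 (by norm_num [wxy])
          _ ≤ lowIdeal wxy (s + 1) := lowIdeal_mul wxy s 1
  · intro f hf
    rw [mem_lowIdeal] at hf
    rw [← MvPolynomial.support_sum_monomial_coeff f]
    apply Ideal.sum_mem
    intro d hd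
    have hwt := hf d hd
    rw [wt_apply] at hwt
    simp only [wxy] at hwt
    norm_num at hwt
    rw [monomial_eq_prod]
    have : (X 0 : R3) ^ (d 0) * X 1 ^ (d 1) ∈ Ideal.span {X 0, X 1} ^ s :=
      XY_pow_mem _ _ _ (by have h2 : (![1,1,0] : Fin 3 → ℕ) 2 = 0 := rfl; rw [h2] at hwt; omega)
    have h2 : C (coeff d f) * ((X 0 : R3) ^ (d 0) * X 1 ^ (d 1)) * X 2 ^ (d 2)
        ∈ Ideal.span {X 0, X 1} ^ s :=
      Ideal.mul_mem_right _ _ (Ideal.mul_mem_left _ _ this)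
    convert h2 using 1
    ring

/-- integer version of the (x,y)-weight -/
def wZ : Fin 3 → ℤ := ![1,1,0]

lemma zwt_apply (d : Fin 3 →₀ ℕ) :
    (Finsupp.weight wZ d : ℤ) = (d 0 : ℤ) + d 1 := by
  rw [Finsupp.weight_apply, Finsupp.sum_fintype]
  · simp [Fin.sum_univ_three, wZ]
  · intro i; simp

lemma zwt_eq_wt (d : Fin 3 →₀ ℕ) :
    (Finsupp.weight wZ d : ℤ) = (wt wxy d : ℤ) := by
  rw [zwt_apply, wt_apply]
  simp [wxy]

/-- the degree-`t` weighted-homogeneous component -/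
def whc (t : ℤ) (f : R3) : R3 := weightedHomogeneousComponent wZ t f

lemma coeff_whc (t : ℤ) (f : R3) (d : Fin 3 →₀ ℕ) :
    coeff d (whc t f) = if Finsupp.weight wZ d = t then coeff d f else 0 :=
  coeff_weightedHomogeneousComponent t f d

lemma whc_isWH (t : ℤ) (f : R3) : IsWeightedHomogeneous wZ (whc t f) t :=
  weightedHomogeneousComponent_isWeightedHomogeneous t f

lemma isWH_mem_lowIdeal {f : R3} {t : ℤ} (hf : IsWeightedHomogeneous wZ f t)
    {s : ℕ} (hs : (s : ℤ) ≤ t) : f ∈ lowIdeal wxy s := by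
  rw [mem_lowIdeal]
  intro d hd
  rw [mem_support_iff] at hd
  have := hf hd
  rw [zwt_eq_wt] at this
  omega

lemma isWH_eq_zero {f : R3} {t : ℤ} (hf : IsWeightedHomogeneous wZ f t)
    {s : ℕ} (hmem : f ∈ lowIdeal wxy s) (hts : t < (s : ℤ)) : f = 0 := by
  by_contra h
  rcases MvPolynomial.ne_zero_iff.1 h with ⟨d, hd⟩
  have h1 := hf hd
  have h2 := mem_lowIdeal.1 hmem d (mem_support_iff.2 hd)
  rw [zwt_eq_wt] at h1
  omega

lemma sub_whc_mem {f : R3} {s : ℕ} (hf : f ∈ lowIdeal wxy s) :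
    f - whc s f ∈ lowIdeal wxy (s+1) := by
  rw [mem_lowIdeal]
  intro d hd
  rw [mem_support_iff, coeff_sub, coeff_whc] at hd
  by_cases h : Finsupp.weight wZ d = (s : ℤ)
  · rw [if_pos h, sub_self] at hd
    exact absurd rfl hd
  · rw [if_neg h, sub_zero] at hd
    have h2 := mem_lowIdeal.1 hf d (mem_support_iff.2 hd)
    rw [zwt_eq_wt] at h
    omega

lemma whc_mem_lowIdeal (t : ℤ) (f : R3) {s : ℕ} (hs : (s:ℤ) ≤ t) :
    whc t f ∈ lowIdeal wxy s :=
  isWH_mem_lowIdeal (whc_isWH t f) hs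

/-- dividing by the monomial xy, keeping track of homogeneity -/
lemma div_xy (H : R3) (hsupp : ∀ d ∈ H.support, 1 ≤ d 0 ∧ 1 ≤ d 1) :
    ∃ q : R3, H = (X 0 * X 1) * q ∧
      (∀ t : ℤ, IsWeightedHomogeneous wZ H t → IsWeightedHomogeneous wZ q (t - 2)) := by
  set e : Fin 3 →₀ ℕ := Finsupp.single 0 1 + Finsupp.single 1 1 with he
  have hXY : (X 0 * X 1 : R3) = monomial e 1 := by
    rw [he]
    show monomial (Finsupp.single 0 1) (1:K) * monomial (Finsupp.single 1 1) 1 = _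
    rw [monomial_mul, mul_one]
  have hle : ∀ d ∈ H.support, e ≤ d := by
    intro d hd
    rcases hsupp d hd with ⟨h0, h1⟩
    intro i
    fin_cases i <;> simp [he, Finsupp.single_apply] <;> omega
  have hmod : MvPolynomial.modMonomial H e = 0 := by
    ext d
    by_cases h : e ≤ d
    · rw [coeff_modMonomial_of_le _ h, coeff_zero]
    · rw [coeff_modMonomial_of_not_le _ h, coeff_zero]
      by_contra hc
      exact h (hle d (mem_support_iff.2 hc))
  refine ⟨MvPolynomial.divMonomial H e, ?_, ?_⟩
  · conv_lhs => rw [← divMonomial_add_modMonomial H e]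
    rw [hmod, add_zero, hXY]
  · intro t ht d hd
    rw [coeff_divMonomial] at hd
    have h1 := ht hd
    rw [map_add] at h1
    have h2 : Finsupp.weight wZ e = 2 := by
      rw [zwt_apply]
      simp [he]
    omega

/-- multiplying by a power of z, keeping track of support -/
lemma support_mul_zpow (N : ℕ) (f : R3) (d : Fin 3 →₀ ℕ) :
    coeff (d + Finsupp.single 2 N) (f * X 2 ^ N) = coeff d f := by
  have : (X 2 ^ N : R3) = monomial (Finsupp.single 2 N) 1 := by
    rw [MvPolynomial.X_pow_eq_monomial]
  rw [this, coeff_mul_monomial, mul_one]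


lemma isWH_z_pow (N : ℕ) : IsWeightedHomogeneous wZ (X 2 ^ N : R3) 0 := by
  rw [MvPolynomial.X_pow_eq_monomial]
  apply isWeightedHomogeneous_monomial
  have := zwt_apply (Finsupp.single 2 N)
  simp [Finsupp.single_apply] at this
  exact_mod_cast this

lemma isWH_u_pow (k : ℕ) : IsWeightedHomogeneous wZ ((X 0 * X 1 : R3) ^ k) (2 * k) := by
  induction k with
  | zero => simpa using isWeightedHomogeneous_one K wZ
  | succ k ih =>
      have hx : IsWeightedHomogeneous wZ (X 0 : R3) 1 := by
        have := isWeightedHomogeneous_X K wZ 0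
        simpa [wZ] using this
      have hy : IsWeightedHomogeneous wZ (X 1 : R3) 1 := by
        have := isWeightedHomogeneous_X K wZ 1
        simpa [wZ] using this
      have := (ih.mul (hx.mul hy))
      have h2 : (2 : ℤ) * k + (1 + 1) = 2 * (k + 1 : ℕ) := by push_cast; ring
      rw [h2] at this
      rw [pow_succ]
      exact this

lemma isWH_neg {f : R3} {t : ℤ} (hf : IsWeightedHomogeneous wZ f t) :
    IsWeightedHomogeneous wZ (-f) t := by
  intro d hd
  rw [coeff_neg, neg_ne_zero] at hd
  exact hf hd

lemma isWH_sub {f g : R3} {t : ℤ} (hf : IsWeightedHomogeneous wZ f t)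
    (hg : IsWeightedHomogeneous wZ g t) : IsWeightedHomogeneous wZ (f - g) t := by
  rw [sub_eq_add_neg]
  exact hf.add (isWH_neg hg)

/-- The syzygy lemma for the monomials (xy)^k z^{n(M-k)}. -/
lemma syzygy (n : ℕ) : ∀ (M : ℕ) (t : ℤ) (H : ℕ → R3),
    (∀ k, IsWeightedHomogeneous wZ (H k) (t - 2*k)) →
    (∑ k ∈ Finset.range (M+1), H k * (X 0 * X 1)^k * (X 2)^(n*(M-k)) = 0) →
    ∃ L : ℕ → R3, (∀ k, IsWeightedHomogeneous wZ (L k) (t - 2 - 2*k)) ∧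
      (∀ k, M ≤ k → L k = 0) ∧ (H 0 = (X 0 * X 1) * L 0) ∧
      (∀ k, 1 ≤ k → k ≤ M → H k = (X 0 * X 1) * L k - (X 2)^n * L (k-1)) := by
  intro M
  induction M with
  | zero =>
      intro t H hWH hsum
      rw [Finset.sum_range_one] at hsum
      simp at hsum
      refine ⟨fun _ => 0, fun k => isWeightedHomogeneous_zero K wZ _, fun k _ => rfl, ?_, ?_⟩
      · rw [hsum, mul_zero]
      · intro k h1 h2; omega
  | succ M ih =>
      intro t H hWH hsum
      -- peel off the k = 0 term
      rw [Finset.sum_range_succ'] at hsum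
      simp only [pow_zero, mul_one, Nat.sub_zero] at hsum
      -- H 0 * z^(n(M+1)) = u * P
      set u : R3 := X 0 * X 1 with hu
      have expand : ∑ k ∈ Finset.range (M+1), H (k+1) * u^(k+1) * (X 2)^(n*(M+1-(k+1))) =
          u * ∑ k ∈ Finset.range (M+1), H (k+1) * u^k * (X 2)^(n*(M-k)) := by
        rw [Finset.mul_sum]
        apply Finset.sum_congr rfl
        intro k hk
        have h1 : M + 1 - (k+1) = M - k := by omega
        rw [h1, pow_succ]
        ring
      have key : H 0 * (X 2)^(n*(M+1)) =
          u * (-∑ k ∈ Finset.range (M+1), H (k+1) * u^k * (X 2)^(n*(M-k))) := by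
        rw [mul_neg]
        linear_combination hsum - expand
      -- divisibility of H 0 by u
      have hsupp : ∀ d ∈ (H 0).support, 1 ≤ d 0 ∧ 1 ≤ d 1 := by
        intro d hd
        rw [mem_support_iff] at hd
        have hc : coeff (d + Finsupp.single 2 (n*(M+1))) (H 0 * (X 2)^(n*(M+1))) ≠ 0 := by
          rw [support_mul_zpow]; exact hd
        rw [key] at hc
        have hmem := mem_support_iff.2 hc
        rcases Finset.mem_add.1 (MvPolynomial.support_mul _ _ hmem) with ⟨p, hp, q, hq, hpq⟩
        have hue : (u : R3) = monomial (Finsupp.single 0 1 + Finsupp.single 1 1) 1 := by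
          rw [hu]
          show monomial (Finsupp.single 0 1) (1:K) * monomial (Finsupp.single 1 1) 1 = _
          rw [monomial_mul, mul_one]
        rw [hue] at hp
        have hp' := MvPolynomial.support_monomial_subset hp
        rw [Finset.mem_singleton] at hp'
        constructor
        · have happ := congrArg (fun v : Fin 3 →₀ ℕ => v 0) hpq
          simp only [Finsupp.add_apply] at happ
          rw [hp'] at happ
          simp [Finsupp.single_apply] at happ
          omega
        · have happ := congrArg (fun v : Fin 3 →₀ ℕ => v 1) hpq
          simp only [Finsupp.add_apply] at happ
          rw [hp'] at happ
          simp [Finsupp.single_apply] at happ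
          omega
      obtain ⟨L0, hL0, hL0wh⟩ := div_xy (H 0) hsupp
      have hL0t : IsWeightedHomogeneous wZ L0 (t - 2) := by
        have := hL0wh t (by simpa using hWH 0)
        exact this
      -- cancel u
      have hbr : L0 * (X 2)^(n*(M+1)) + ∑ k ∈ Finset.range (M+1),
          H (k+1) * u^k * (X 2)^(n*(M-k)) = 0 := by
        have hun : (u : R3) ≠ 0 := mul_ne_zero (MvPolynomial.X_ne_zero 0) (MvPolynomial.X_ne_zero 1)
        apply mul_left_cancel₀ hun
        rw [mul_zero, mul_add]
        rw [hL0] at key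
        have : u * L0 * (X 2)^(n*(M+1)) = u * (L0 * (X 2)^(n*(M+1))) := by ring
        rw [this] at key
        rw [key]
        ring
      -- the new H'
      set H' : ℕ → R3 := fun k' => if k' = 0 then H 1 + (X 2)^n * L0 else H (k'+1) with hH'
      have hsum' : ∑ k ∈ Finset.range (M+1), H' k * u^k * (X 2)^(n*(M-k)) = 0 := by
        rw [Finset.sum_range_succ']
        have e1 : ∀ x : ℕ, H' (x+1) = H (x+2) := fun x => if_neg (Nat.succ_ne_zero _)
        have e0 : H' 0 = H 1 + (X 2)^n * L0 := if_pos rfl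
        simp only [e1, e0, pow_zero, mul_one, Nat.sub_zero]
        have hz : L0 * (X 2)^(n*(M+1)) = ((X 2)^n * L0) * (X 2)^(n*M) := by
          have hnm : n*(M+1) = n + n*M := by ring
          rw [hnm, pow_add]
          ring
        rw [hz] at hbr
        rw [Finset.sum_range_succ'] at hbr
        norm_num at hbr ⊢
        linear_combination hbr
      have hWH' : ∀ k, IsWeightedHomogeneous wZ (H' k) (t - 2 - 2*k) := by
        intro k
        rcases Nat.eq_zero_or_pos k with rfl | hk
        · simp only [hH', if_pos rfl]
          have h1 : IsWeightedHomogeneous wZ (H 1) (t - 2) := by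
            have := hWH 1
            norm_num at this
            exact this
          have h2 : IsWeightedHomogeneous wZ ((X 2)^n * L0) (t - 2) := by
            have := (isWH_z_pow (K := K) n).mul hL0t
            simpa using this
          have h3 := h1.add h2
          simpa using h3
        · simp only [hH', if_neg (Nat.pos_iff_ne_zero.1 hk)]
          have := hWH (k+1)
          convert this using 1
          push_cast; ring
      obtain ⟨L', hL'wh, hL'0, hL'first, hL'rest⟩ := ih (t - 2) H' hWH' hsum'
      refine ⟨fun k => if k = 0 then L0 else L' (k-1), ?_, ?_, ?_, ?_⟩
      · intro k
        rcases Nat.eq_zero_or_pos k with rfl | hk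
        · simpa using hL0t
        · simp only [if_neg (Nat.pos_iff_ne_zero.1 hk)]
          have := hL'wh (k-1)
          convert this using 1
          have : ((k : ℤ)) = ((k - 1 : ℕ) : ℤ) + 1 := by
            push_cast [Nat.cast_sub hk]; ring
          rw [this]; ring
      · intro k hk
        have hk0 : k ≠ 0 := by omega
        simp only [if_neg hk0]
        exact hL'0 _ (by omega)
      · simp only [if_pos rfl]; exact hL0
      · intro k h1 h2
        rcases eq_or_lt_of_le h1 with he | hgt
        · -- k = 1
          have hke : k = 1 := he.symm
          subst hke
          simp only [if_neg one_ne_zero, if_pos rfl]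
          have : H' 0 = u * L' 0 := hL'first
          simp only [hH', if_pos rfl] at this
          have : H 1 = u * L' 0 - (X 2)^n * L0 := by linear_combination this
          simpa using this
        · -- k ≥ 2
          have hk0 : k ≠ 0 := by omega
          have hk10 : k - 1 ≠ 0 := by omega
          simp only [if_neg hk0, if_neg hk10]
          have := hL'rest (k-1) (by omega) (by omega)
          simp only [hH', if_neg hk10] at this
          have hkk : k - 1 + 1 = k := by omega
          rw [hkk] at this
          exact this

lemma isWH_neg_one_pow (p : ℕ) : IsWeightedHomogeneous wZ ((-1 : R3) ^ p) 0 := by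
  induction p with
  | zero => simpa using isWeightedHomogeneous_one K wZ
  | succ p ih =>
      have h1 : IsWeightedHomogeneous wZ (-1 : R3) 0 := isWH_neg (isWeightedHomogeneous_one K wZ)
      have := ih.mul h1
      rw [pow_succ]
      simpa using this

lemma u_pow_mem_lowIdeal (k : ℕ) : ((X 0 * X 1 : R3)) ^ k ∈ lowIdeal wxy (2*k) :=
  isWH_mem_lowIdeal (isWH_u_pow k) (by push_cast; omega)

lemma mul_mem_lowIdeal {f g : R3} {s t : ℕ} (hf : f ∈ lowIdeal wxy s)
    (hg : g ∈ lowIdeal wxy t) : f * g ∈ lowIdeal wxy (s + t) :=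
  lowIdeal_mul wxy s t (Ideal.mul_mem_mul hf hg)

/-- powers of F differ from powers of -z^n by something in (x,y) -/
lemma Fpow_diff {n : ℕ} {F : R3} (hFz : F + (X 2)^n ∈ lowIdeal wxy 1) (p : ℕ) :
    F ^ p - (-(X 2)^n) ^ p ∈ lowIdeal wxy 1 := by
  induction p with
  | zero =>
      simp
  | succ p ih =>
      have key : F^(p+1) - (-(X 2)^n)^(p+1) =
          F^p * (F + (X 2)^n) + (F^p - (-(X 2)^n)^p) * (-(X 2)^n) := by
        rw [pow_succ, pow_succ]
        ring
      rw [key]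
      apply Ideal.add_mem
      · exact Ideal.mul_mem_left _ _ hFz
      · exact Ideal.mul_mem_right _ _ ih

/-- The key representation improvement lemma. -/
lemma improve (n : ℕ) (F : R3) (hFz : F + (X 2)^n ∈ lowIdeal wxy 1) :
    ∀ (s : ℕ) (m : ℕ) (c : ℕ → R3),
    (∑ k ∈ Finset.range (m+1), c k * ((X 0 * X 1) ^ k * F ^ (m - k)) ∈ lowIdeal wxy s) →
    ∃ c' : ℕ → R3, (∀ k, c' k ∈ lowIdeal wxy (s - 2*k)) ∧
      ∑ k ∈ Finset.range (m+1), c' k * ((X 0 * X 1)^k * F^(m-k)) =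
      ∑ k ∈ Finset.range (m+1), c k * ((X 0 * X 1)^k * F^(m-k)) := by
  intro s
  induction s with
  | zero =>
      intro m c _
      refine ⟨c, fun k => ?_, rfl⟩
      have h0 : (0:ℕ) - 2*k = 0 := by omega
      rw [h0]
      exact lowIdeal_zero_top wxy _
  | succ s ihs =>
      intro m c hsum
      obtain ⟨c', hc'mem, hc'sum⟩ := ihs m c (lowIdeal_mono wxy (Nat.le_succ s) hsum)
      rw [← hc'sum] at hsum
      set u : R3 := X 0 * X 1 with hu
      -- homogeneous parts
      set h : ℕ → R3 := fun k => if 2*k ≤ s then whc ((s:ℤ) - 2*k) (c' k) else 0 with hh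
      have h_isWH : ∀ k, IsWeightedHomogeneous wZ (h k) ((s:ℤ) - 2*k) := by
        intro k
        by_cases hk : 2*k ≤ s
        · simp only [hh, if_pos hk]; exact whc_isWH _ _
        · simp only [hh, if_neg hk]; exact isWeightedHomogeneous_zero K wZ _
      have h_mem : ∀ k, h k ∈ lowIdeal wxy (s - 2*k) := by
        intro k
        by_cases hk : 2*k ≤ s
        · simp only [hh, if_pos hk]
          exact whc_mem_lowIdeal _ _ (by push_cast; omega)
        · simp only [hh, if_neg hk]
          exact (lowIdeal wxy _).zero_mem
      have hch_mem : ∀ k, c' k - h k ∈ lowIdeal wxy (s + 1 - 2*k) := by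
        intro k
        by_cases hk : 2*k ≤ s
        · have e1 : ((s - 2*k : ℕ) : ℤ) = (s:ℤ) - 2*k := by push_cast; omega
          have := sub_whc_mem (f := c' k) (s := s - 2*k) (hc'mem k)
          rw [e1] at this
          simp only [hh, if_pos hk]
          have e2 : s - 2*k + 1 = s + 1 - 2*k := by omega
          rwa [e2] at this
        · have e2 : s + 1 - 2*k = 0 := by omega
          rw [e2]
          exact lowIdeal_zero_top wxy _
      -- the top homogeneous part of the sum vanishes
      set T : R3 := ∑ k ∈ Finset.range (m+1), h k * (u^k * (-(X 2)^n)^(m-k)) with hT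
      have hT_WH : IsWeightedHomogeneous wZ T (s : ℤ) := by
        apply IsWeightedHomogeneous.sum
        intro k _
        have hz : IsWeightedHomogeneous wZ ((-(X 2)^n : R3)^(m-k)) 0 := by
          rw [neg_pow, ← pow_mul]
          simpa using (isWH_neg_one_pow (K := K) (m-k)).mul (isWH_z_pow (K := K) (n*(m-k)))
        have h1 := (h_isWH k).mul ((isWH_u_pow k).mul hz)
        convert h1 using 1
        push_cast
        ring
      have hT_mem : T ∈ lowIdeal wxy (s+1) := by
        have hdiff : ∀ k ∈ Finset.range (m+1),
            c' k * (u^k * F^(m-k)) - h k * (u^k * (-(X 2)^n)^(m-k)) ∈ lowIdeal wxy (s+1) := by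
          intro k _
          have e1 : c' k * (u^k * F^(m-k)) - h k * (u^k * (-(X 2)^n)^(m-k)) =
              (c' k - h k) * u^k * F^(m-k) +
                h k * u^k * (F^(m-k) - (-(X 2)^n)^(m-k)) := by ring
          rw [e1]
          apply Ideal.add_mem
          · have m1 : (c' k - h k) * u^k ∈ lowIdeal wxy (s + 1 - 2*k + 2*k) :=
              mul_mem_lowIdeal (hch_mem k) (u_pow_mem_lowIdeal k)
            have m2 : (c' k - h k) * u^k ∈ lowIdeal wxy (s+1) :=
              lowIdeal_mono wxy (by omega) m1
            exact Ideal.mul_mem_right _ _ m2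
          · have m1 : h k * u^k ∈ lowIdeal wxy (s - 2*k + 2*k) :=
              mul_mem_lowIdeal (h_mem k) (u_pow_mem_lowIdeal k)
            by_cases hk : 2*k ≤ s
            · have m2 : h k * u^k * (F^(m-k) - (-(X 2)^n)^(m-k)) ∈
                  lowIdeal wxy (s - 2*k + 2*k + 1) :=
                mul_mem_lowIdeal m1 (Fpow_diff hFz (m-k))
              exact lowIdeal_mono wxy (by omega) m2
            · simp only [hh, if_neg hk]
              rw [zero_mul, zero_mul]
              exact (lowIdeal wxy (s+1)).zero_mem
        have e2 : T = ∑ k ∈ Finset.range (m+1), c' k * (u^k * F^(m-k)) -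
            ∑ k ∈ Finset.range (m+1),
              (c' k * (u^k * F^(m-k)) - h k * (u^k * (-(X 2)^n)^(m-k))) := by
          rw [Finset.sum_sub_distrib, hT]
          abel
        rw [e2]
        exact Ideal.sub_mem _ hsum (Ideal.sum_mem _ hdiff)
      have hT0 : T = 0 := isWH_eq_zero hT_WH hT_mem (by omega)
      -- syzygy
      set H : ℕ → R3 := fun k => (-1 : R3)^(m-k) * h k with hH
      have hsq : ∀ p : ℕ, (-1 : R3)^p * (-1 : R3)^p = 1 := by
        intro p
        rw [← mul_pow]
        norm_num
      have hHh : ∀ k, (-1 : R3)^(m-k) * H k = h k := by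
        intro k
        rw [hH]
        calc (-1 : R3)^(m-k) * ((-1 : R3)^(m-k) * h k)
            = ((-1 : R3)^(m-k) * (-1 : R3)^(m-k)) * h k := by ring
          _ = h k := by rw [hsq]; ring
      have hH_WH : ∀ k, IsWeightedHomogeneous wZ (H k) ((s:ℤ) - 2*k) := by
        intro k
        have := (isWH_neg_one_pow (K := K) (m-k)).mul (h_isWH k)
        simpa using this
      have hHsum : ∑ k ∈ Finset.range (m+1), H k * u^k * (X 2)^(n*(m-k)) = 0 := by
        rw [← hT0, hT]
        apply Finset.sum_congr rfl
        intro k _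
        rw [neg_pow, hH, pow_mul]
        ring
      obtain ⟨L, hLwh, hLtop, hL0, hLrest⟩ := syzygy n m (s : ℤ) H hH_WH hHsum
      -- the correction terms
      set G : R3 := F + (X 2)^n with hG
      set e : ℕ → R3 := fun k => if k = 0 then 0 else (-1 : R3)^(m-k) * (G * L (k-1)) with he
      have he_mem : ∀ k, e k ∈ lowIdeal wxy (s + 1 - 2*k) := by
        intro k
        rcases Nat.eq_zero_or_pos k with rfl | hk
        · simp only [he, if_pos rfl]
          exact (lowIdeal wxy _).zero_mem
        · simp only [he, if_neg (Nat.pos_iff_ne_zero.1 hk)]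
          by_cases hks : 2*k ≤ s
          · have hL : L (k-1) ∈ lowIdeal wxy (s - 2*k) := by
              apply isWH_mem_lowIdeal (hLwh (k-1))
              have : ((k - 1 : ℕ) : ℤ) = (k : ℤ) - 1 := by
                push_cast [Nat.cast_sub hk]; ring
              rw [this]
              push_cast
              omega
            have m1 : G * L (k-1) ∈ lowIdeal wxy (1 + (s - 2*k)) :=
              mul_mem_lowIdeal hFz hL
            have m2 : G * L (k-1) ∈ lowIdeal wxy (s + 1 - 2*k) :=
              lowIdeal_mono wxy (by omega) m1
            exact Ideal.mul_mem_left _ _ m2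
          · have e2 : s + 1 - 2*k = 0 := by omega
            rw [e2]
            exact lowIdeal_zero_top wxy _
      -- the sum of corrections vanishes
      have hcorr : ∑ k ∈ Finset.range (m+1), (h k + e k) * (u^k * F^(m-k)) = 0 := by
        have step1 : ∀ k ∈ Finset.range (m+1), (h k + e k) * (u^k * F^(m-k)) =
            (-1 : R3)^(m-k) * (L k * (u^(k+1) * F^(m-k))) +
            (if k = 0 then 0 else (-1 : R3)^(m-k) * (L (k-1) * (u^k * F^(m-k+1)))) := by
          intro k hk
          rw [Finset.mem_range] at hk
          rcases Nat.eq_zero_or_pos k with rfl | hkpos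
          · simp only [he, eq_self_iff_true, if_true, add_zero]
            rw [← hHh 0, hL0]
            ring
          · have hk0 : k ≠ 0 := Nat.pos_iff_ne_zero.1 hkpos
            simp only [he, if_neg hk0]
            rw [← hHh k, hLrest k hkpos (by omega)]
            have hFk : F^(m-k) * F = F^(m-k+1) := by rw [pow_succ]
            have hG2 : G = F + (X 2)^n := hG
            calc ((-1:R3)^(m-k) * (u * L k - (X 2)^n * L (k-1)) + (-1:R3)^(m-k) * (G * L (k-1)))
                  * (u^k * F^(m-k))
                = (-1:R3)^(m-k) * (L k * (u * u^k * F^(m-k))) +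
                  (-1:R3)^(m-k) * ((G - (X 2)^n) * L (k-1) * (u^k * F^(m-k))) := by ring
              _ = (-1 : R3)^(m-k) * (L k * (u^(k+1) * F^(m-k))) +
                  (-1 : R3)^(m-k) * (L (k-1) * (u^k * F^(m-k+1))) := by
                    rw [hG2]
                    rw [← pow_succ']
                    have : F + (X 2)^n - (X 2)^n = F := by ring
                    rw [this]
                    rw [← hFk]
                    ring
        rw [Finset.sum_congr rfl step1, Finset.sum_add_distrib]
        -- second sum reindex
        have e3 : ∑ k ∈ Finset.range (m+1),
            (if k = 0 then 0 else (-1 : R3)^(m-k) * (L (k-1) * (u^k * F^(m-k+1)))) =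
            - ∑ x ∈ Finset.range m, (-1 : R3)^(m-x) * (L x * (u^(x+1) * F^(m-x))) := by
          rw [Finset.sum_range_succ']
          simp only [eq_self_iff_true, if_true, add_zero, Nat.succ_ne_zero, if_false,
            Nat.add_sub_cancel]
          rw [← Finset.sum_neg_distrib]
          apply Finset.sum_congr rfl
          intro x hx
          rw [Finset.mem_range] at hx
          have e4 : m - (x+1) + 1 = m - x := by omega
          have e5 : (-1 : R3)^(m-(x+1)) = -(-1 : R3)^(m-x) := by
            have : m - x = (m - (x+1)) + 1 := by omega
            rw [this, pow_succ]
            ring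
          rw [e4, e5]
          ring
        rw [e3]
        have e6 : ∑ k ∈ Finset.range (m+1), (-1:R3)^(m-k) * (L k * (u^(k+1) * F^(m-k))) =
            ∑ x ∈ Finset.range m, (-1:R3)^(m-x) * (L x * (u^(x+1) * F^(m-x))) +
              (-1:R3)^(m-m) * (L m * (u^(m+1) * F^(m-m))) := by
          rw [Finset.sum_range_succ]
        rw [e6, hLtop m (le_refl m)]
        ring
      -- assemble
      refine ⟨fun k => c' k - h k - e k, ?_, ?_⟩
      · intro k
        exact Ideal.sub_mem _ (hch_mem k) (he_mem k)
      · have e7 : ∀ k ∈ Finset.range (m+1), (c' k - h k - e k) * (u^k * F^(m-k)) =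
            c' k * (u^k * F^(m-k)) - (h k + e k) * (u^k * F^(m-k)) := by
          intro k _; ring
        rw [Finset.sum_congr rfl e7, Finset.sum_sub_distrib, hcorr, sub_zero, hc'sum]

/-- the valuation weight -/
def wv (n : ℕ) : Fin 3 → ℕ := ![n, n, 1]

lemma finset_prod_mem_pow {ι : Type*} (s : Finset ι) (f : ι → R3) (J : Ideal R3)
    (h : ∀ i ∈ s, f i ∈ J) : ∏ i ∈ s, f i ∈ J ^ s.card := by
  induction s using Finset.cons_induction with
  | empty => simp [Ideal.one_eq_top]
  | cons i s his ih =>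
      rw [Finset.prod_cons, Finset.card_cons, pow_succ, mul_comm (J ^ s.card) J]
      exact Ideal.mul_mem_mul (h i (Finset.mem_cons_self i s))
        (ih fun j hj => h j (Finset.mem_cons_of_mem hj))

lemma zn_sub_prod_mem {n : ℕ} (j : Fin 3) (c : Fin n → K) :
    (X 2 : R3)^n - ∏ i : Fin n, (X 2 - C (c i) * X j) ∈ Ideal.span {(X j : R3)} := by
  have main : ∀ s : Finset (Fin n),
      (X 2 : R3)^s.card - ∏ i ∈ s, (X 2 - C (c i) * X j) ∈ Ideal.span {(X j : R3)} := by
    intro s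
    induction s using Finset.cons_induction with
    | empty => simp
    | cons i s his ih =>
        rw [Finset.prod_cons, Finset.card_cons]
        have key : (X 2 : R3)^(s.card + 1) - (X 2 - C (c i) * X j) * ∏ i ∈ s, (X 2 - C (c i) * X j)
            = X 2 * ((X 2 : R3)^s.card - ∏ i ∈ s, (X 2 - C (c i) * X j)) +
              (C (c i) * (∏ i ∈ s, (X 2 - C (c i) * X j))) * X j := by
          rw [pow_succ]
          ring
        rw [key]
        exact Ideal.add_mem _ (Ideal.mul_mem_left _ _ ih)
          (Ideal.mul_mem_left _ _ (Ideal.subset_span rfl))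
  have := main Finset.univ
  simpa using this

lemma span_X_le_lowIdeal_wxy (j : Fin 3) (hj : j ≠ 2) :
    Ideal.span {(X j : R3)} ≤ lowIdeal wxy 1 := by
  rw [Ideal.span_le, Set.singleton_subset_iff]
  apply X_mem_lowIdeal
  fin_cases j <;> simp [wxy] at hj ⊢

/-- hypothesis on the shape of F implies the key structural fact -/
lemma F_plus_zn_mem {n : ℕ} (a b : Fin n → K) (F : R3)
    (hF : F = X 2 ^ n - ∏ i : Fin n, (X 2 - MvPolynomial.C (b i) * X 0)
        - ∏ i : Fin n, (X 2 - MvPolynomial.C (a i) * X 1)) :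
    F + (X 2)^n ∈ lowIdeal wxy 1 := by
  have h1 := zn_sub_prod_mem (n := n) 0 b
  have h2 := zn_sub_prod_mem (n := n) 1 a
  have e : F + (X 2)^n =
      ((X 2 : R3)^n - ∏ i : Fin n, (X 2 - C (b i) * X 0)) +
      ((X 2 : R3)^n - ∏ i : Fin n, (X 2 - C (a i) * X 1)) := by
    rw [hF]; ring
  rw [e]
  exact Ideal.add_mem _ (span_X_le_lowIdeal_wxy 0 (by decide) h1)
    (span_X_le_lowIdeal_wxy 1 (by decide) h2)

lemma F_mem_wv {n : ℕ} (hn : 1 ≤ n) (a b : Fin n → K) (F : R3)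
    (hF : F = X 2 ^ n - ∏ i : Fin n, (X 2 - MvPolynomial.C (b i) * X 0)
        - ∏ i : Fin n, (X 2 - MvPolynomial.C (a i) * X 1)) :
    F ∈ lowIdeal (wv n) n := by
  have hz : (X 2 : R3) ∈ lowIdeal (wv n) 1 := X_mem_lowIdeal _ 2 1 (by simp [wv])
  have hzn : (X 2 : R3)^n ∈ lowIdeal (wv n) n := by
    have h1 := lowIdeal_pow (wv n) 1 n (Ideal.pow_mem_pow hz n)
    have h3 : n * 1 = n := by ring
    rwa [h3] at h1
  have hfac : ∀ (j : Fin 3) (c : K), j ≠ 2 → (X 2 - C c * X j : R3) ∈ lowIdeal (wv n) 1 := by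
    intro j c hj
    apply Ideal.sub_mem _ hz
    apply Ideal.mul_mem_left
    have : (X j : R3) ∈ lowIdeal (wv n) n := by
      apply X_mem_lowIdeal
      fin_cases j <;> simp [wv] at hj ⊢
    exact lowIdeal_mono _ hn this
  have hprod : ∀ (j : Fin 3) (c : Fin n → K), j ≠ 2 →
      (∏ i : Fin n, (X 2 - C (c i) * X j) : R3) ∈ lowIdeal (wv n) n := by
    intro j c hj
    have h1 := lowIdeal_pow (wv n) 1 (Finset.univ (α := Fin n)).card
      (finset_prod_mem_pow Finset.univ (fun i => (X 2 - C (c i) * X j : R3))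
        (lowIdeal (wv n) 1) (fun i _ => hfac j (c i) hj))
    have h3 : (Finset.univ (α := Fin n)).card * 1 = n := by simp
    rwa [h3] at h1
  rw [hF]
  exact Ideal.sub_mem _ (Ideal.sub_mem _ hzn (hprod 0 b (by decide))) (hprod 1 a (by decide))

lemma I_pow_le_lowIdeal {n : ℕ} (hn : 1 ≤ n) (F : R3) (hFv : F ∈ lowIdeal (wv n) n)
    (I : Ideal R3) (hI : I = Ideal.span {X 0 * X 1, X 0 * F, X 1 * F}) (r : ℕ) :
    I ^ r ≤ lowIdeal (wv n) (r * (2*n)) := by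
  have hx : (X 0 : R3) ∈ lowIdeal (wv n) n := X_mem_lowIdeal _ 0 n (by simp [wv])
  have hy : (X 1 : R3) ∈ lowIdeal (wv n) n := X_mem_lowIdeal _ 1 n (by simp [wv])
  have hIle : I ≤ lowIdeal (wv n) (2*n) := by
    rw [hI, Ideal.span_le]
    rintro g hg
    simp only [Set.mem_insert_iff, Set.mem_singleton_iff] at hg
    have h2 : (2*n) = n + n := by ring
    rcases hg with rfl | rfl | rfl
    · rw [h2]; exact lowIdeal_mul _ n n (Ideal.mul_mem_mul hx hy)
    · rw [h2]; exact lowIdeal_mul _ n n (Ideal.mul_mem_mul hx hFv)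
    · rw [h2]; exact lowIdeal_mul _ n n (Ideal.mul_mem_mul hy hFv)
  calc I ^ r ≤ (lowIdeal (wv n) (2*n)) ^ r := Ideal.pow_right_mono hIle r
    _ ≤ lowIdeal (wv n) (r * (2*n)) := lowIdeal_pow _ _ _

/-- the witness is not in I^r -/
lemma witness_coeff {n : ℕ} (F : R3) (hFz : F + (X 2)^n ∈ lowIdeal wxy 1)
    (a b p : ℕ) :
    coeff (Finsupp.single 0 a + Finsupp.single 1 b + Finsupp.single 2 (n*p))
      ((X 0 : R3)^a * (X 1)^b * F^p) = (-1 : K)^p := by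
  set sab : Fin 3 →₀ ℕ := Finsupp.single 0 a + Finsupp.single 1 b with hsab
  have hxy : (X 0 : R3)^a * (X 1)^b = monomial sab 1 := by
    rw [X_pow_eq_monomial, X_pow_eq_monomial, monomial_mul, mul_one]
  rw [hxy]
  have hcm : coeff (sab + Finsupp.single 2 (n*p)) ((monomial sab (1:K)) * F^p) =
      1 * coeff (Finsupp.single 2 (n*p)) (F^p) := coeff_monomial_mul _ _ _ _
  rw [hcm, one_mul]
  have hdiff := Fpow_diff hFz p
  have e1 : F ^ p = (-(X 2 : R3)^n)^p + (F^p - (-(X 2)^n)^p) := by ring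
  rw [e1, coeff_add]
  have e2 : coeff (Finsupp.single 2 (n*p)) (F^p - (-(X 2 : R3)^n)^p) = 0 := by
    by_contra hc
    have hmem := mem_lowIdeal.1 hdiff _ (mem_support_iff.2 hc)
    rw [wt_apply] at hmem
    simp [Finsupp.single_apply, wxy] at hmem
  rw [e2, add_zero]
  have e3 : (-(X 2 : R3)^n)^p = C ((-1 : K)^p) * (X 2)^(n*p) := by
    rw [neg_pow, ← pow_mul]
    congr 1
    rw [map_pow, map_neg, map_one]
  rw [e3, coeff_C_mul, coeff_single_X_pow]
  simp

lemma arith (m r k : ℕ) (hm : 1 ≤ m) (hr : 1 ≤ r) (hmr : 4*r ≤ 3*m+1) (hk : k ≤ m) :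
    ∃ j, j ≤ r ∧ k + j ≤ m ∧ r ≤ k + j ∧ j ≤ (m - 2*k) + 2*(k + j - r) := by
  rcases le_or_gt (2*k) m with h | h
  · exact ⟨max (2*r - m) (r - k), by omega, by omega, by omega, by omega⟩
  · exact ⟨2*r - 2*k, by omega, by omega, by omega, by omega⟩

/-- containment direction -/
lemma contain {n : ℕ} (hn : 1 ≤ n) (F : R3) (hFz : F + (X 2)^n ∈ lowIdeal wxy 1)
    (I : Ideal R3) (hI : I = Ideal.span {X 0 * X 1, X 0 * F, X 1 * F})
    (m r : ℕ) (hm : 1 ≤ m) (hr : 1 ≤ r) (hmr : 4*r ≤ 3*m+1) :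
    Ideal.span {X 0, X 1} ^ m ⊓ Ideal.span {X 0 * X 1, F} ^ m ≤ I ^ r := by
  intro g hg
  obtain ⟨hg1, hg2⟩ := Submodule.mem_inf.1 hg
  obtain ⟨c, hc⟩ := mem_span_pair_pow hg2
  have hg1' : ∑ k ∈ Finset.range (m+1), c k * ((X 0 * X 1) ^ k * F ^ (m - k)) ∈
      lowIdeal wxy m := by
    rw [← hc, ← W_eq]
    exact hg1
  obtain ⟨c', hmem, hsum⟩ := improve n F hFz m m c hg1'
  rw [hc, ← hsum]
  apply Ideal.sum_mem
  intro k hk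
  rw [Finset.mem_range] at hk
  obtain ⟨j, hj1, hj2, hj3, hj4⟩ := arith m r k hm hr hmr (by omega)
  set u : R3 := X 0 * X 1 with hu
  have hcm : c' k ∈ Ideal.span {X 0, X 1} ^ (m - 2*k) := by
    rw [W_eq]
    exact hmem k
  have huspan : ∀ t : ℕ, (u^t : R3) ∈ Ideal.span {X 0, X 1} ^ (2*t) := by
    intro t
    have : (u^t : R3) = X 0 ^ t * X 1 ^ t := by rw [hu, mul_pow]
    rw [this]
    exact XY_pow_mem t t (2*t) (by omega)
  have hA : c' k * u^(k + j - r) ∈ Ideal.span {X 0, X 1} ^ j := by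
    have h1 := Ideal.mul_mem_mul hcm (huspan (k + j - r))
    rw [← pow_add] at h1
    exact Ideal.pow_le_pow_right (by omega) h1
  have hxyF : Ideal.span {(X 0 : R3), X 1} * Ideal.span {F} ≤ I := by
    rw [Ideal.span_mul_span', hI, Ideal.span_le]
    rintro v ⟨w, hw, f, hf, rfl⟩
    simp only [Set.mem_insert_iff, Set.mem_singleton_iff] at hw
    rw [Set.mem_singleton_iff] at hf
    subst hf
    rcases hw with rfl | rfl
    · exact Ideal.subset_span (by simp)
    · exact Ideal.subset_span (by simp)
  have hAF : c' k * u^(k + j - r) * F^j ∈ I ^ j := by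
    have h1 := Ideal.mul_mem_mul hA (Ideal.pow_mem_pow
      (Ideal.subset_span (Set.mem_singleton F)) j)
    rw [← mul_pow] at h1
    exact Ideal.pow_right_mono hxyF j h1
  have huI : (u : R3) ∈ I := by
    rw [hI, hu]
    exact Ideal.subset_span (by simp)
  have hfull : c' k * u^(k + j - r) * F^j * u^(r-j) ∈ I ^ r := by
    have h1 := Ideal.mul_mem_mul hAF (Ideal.pow_mem_pow huI (r-j))
    rw [← pow_add] at h1
    have e : j + (r - j) = r := by omega
    rwa [e] at h1
  have hterm : c' k * (u^k * F^(m-k)) =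
      (c' k * u^(k + j - r) * F^j * u^(r-j)) * F^(m-k-j) := by
    have e1 : u^(k+j-r) * u^(r-j) = u^k := by
      rw [← pow_add]
      congr 1
      omega
    have e2 : (F : R3)^j * F^(m-k-j) = F^(m-k) := by
      rw [← pow_add]
      congr 1
      omega
    calc c' k * (u^k * F^(m-k)) = c' k * ((u^(k+j-r) * u^(r-j)) * (F^j * F^(m-k-j))) := by
          rw [e1, e2]
      _ = (c' k * u^(k + j - r) * F^j * u^(r-j)) * F^(m-k-j) := by ring
  rw [hterm]
  exact Ideal.mul_mem_right _ _ hfull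

/-- non-containment direction -/
lemma noncontain {n : ℕ} (hn : 1 ≤ n) (F : R3)
    (hFz : F + (X 2)^n ∈ lowIdeal wxy 1) (hFv : F ∈ lowIdeal (wv n) n)
    (I : Ideal R3) (hI : I = Ideal.span {X 0 * X 1, X 0 * F, X 1 * F})
    (m r : ℕ) (hm : 1 ≤ m) (hmr : 3*m+2 ≤ 4*r) :
    ¬ (Ideal.span {X 0, X 1} ^ m ⊓ Ideal.span {X 0 * X 1, F} ^ m ≤ I ^ r) := by
  intro hle
  set p : ℕ := m - m / 2 with hp
  set g : R3 := X 0 ^ p * X 1 ^ (m/2) * F ^ p with hg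
  have hgmem : g ∈ Ideal.span {X 0, X 1} ^ m ⊓ Ideal.span {X 0 * X 1, F} ^ m := by
    rw [Submodule.mem_inf]
    constructor
    · exact Ideal.mul_mem_right _ _ (XY_pow_mem p (m/2) m (by omega))
    · have hc' : p = (m - 2*(m/2)) + m/2 := by omega
      have e1 : g = X 0 ^ (m - 2*(m/2)) * ((X 0 * X 1)^(m/2) * F^p) := by
        rw [hg, hc', pow_add, mul_pow]
        ring
      rw [e1]
      apply Ideal.mul_mem_left
      have h1 : ((X 0 * X 1 : R3))^(m/2) ∈ Ideal.span {X 0 * X 1, F} ^ (m/2) :=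
        Ideal.pow_mem_pow (Ideal.subset_span (by simp)) _
      have h2 : (F : R3)^p ∈ Ideal.span {X 0 * X 1, F} ^ p :=
        Ideal.pow_mem_pow (Ideal.subset_span (by simp)) _
      have h3 := Ideal.mul_mem_mul h1 h2
      rw [← pow_add] at h3
      have e2 : m/2 + p = m := by omega
      rwa [e2] at h3
  have hgr := hle hgmem
  have hgw := I_pow_le_lowIdeal hn F hFv I hI r hgr
  set μ : Fin 3 →₀ ℕ := Finsupp.single 0 p + Finsupp.single 1 (m/2) +
    Finsupp.single 2 (n*p) with hμ
  have hco : coeff μ g = (-1 : K)^p := witness_coeff F hFz p (m/2) p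
  have hsupp : μ ∈ g.support := by
    rw [mem_support_iff, hco]
    exact pow_ne_zero _ (neg_ne_zero.2 one_ne_zero)
  have h2 := mem_lowIdeal.1 hgw μ hsupp
  rw [wt_apply] at h2
  have hμ0 : μ 0 = p := by simp [hμ, Finsupp.single_apply]
  have hμ1 : μ 1 = m/2 := by simp [hμ, Finsupp.single_apply]
  have hμ2 : μ 2 = n*p := by simp [hμ, Finsupp.single_apply]
  rw [hμ0, hμ1, hμ2] at h2
  have e3 : p * wv n 0 + m / 2 * wv n 1 + n * p * wv n 2 = n * (2*p + m/2) := by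
    simp [wv]
    ring
  have e4 : r * (2*n) = n * (2*r) := by ring
  rw [e3, e4] at h2
  have h5 : 2*r ≤ 2*p + m/2 := Nat.le_of_mul_le_mul_left h2 (by omega)
  omega

end NCI
end

open NCI in
theorem stmt_17 {K : Type*} [Field K] (n : ℕ) (hn : 1 ≤ n)
    (a b : Fin n → K) (ha : Function.Injective a) (hb : Function.Injective b)
    (ha0 : ∀ i, a i ≠ 0) (hb0 : ∀ i, b i ≠ 0)
    (F : MvPolynomial (Fin 3) K)
    (hF : F = X 2 ^ n - ∏ i : Fin n, (X 2 - MvPolynomial.C (b i) * X 0)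
        - ∏ i : Fin n, (X 2 - MvPolynomial.C (a i) * X 1))
    (I : Ideal (MvPolynomial (Fin 3) K))
    (hI : I = Ideal.span {X 0 * X 1, X 0 * F, X 1 * F})
    (Isym : ℕ → Ideal (MvPolynomial (Fin 3) K))
    (hIsym : ∀ m, Isym m =
      Ideal.span {X 0, X 1} ^ m ⊓ Ideal.span {X 0 * X 1, F} ^ m) :
    (∀ m r : ℕ, 1 ≤ m → 1 ≤ r → (Isym m ≤ I ^ r ↔ 4 * r ≤ 3 * m + 1)) ∧
      sSup {x : ℝ | ∃ m r : ℕ, 0 < m ∧ 0 < r ∧ ¬ Isym m ≤ I ^ r ∧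
          x = (m : ℝ) / r} = 4 / 3 := by
  have hFz := F_plus_zn_mem a b F hF
  have hFv := F_mem_wv hn a b F hF
  have part1 : ∀ m r : ℕ, 1 ≤ m → 1 ≤ r → (Isym m ≤ I ^ r ↔ 4 * r ≤ 3 * m + 1) := by
    intro m r hm hr
    rw [hIsym m]
    constructor
    · intro hle
      by_contra hc
      exact noncontain hn F hFz hFv I hI m r hm (by omega) hle
    · intro h4r
      exact contain hn F hFz I hI m r hm hr h4r
  refine ⟨part1, ?_⟩
  have hmemS : ∀ m r : ℕ, 1 ≤ m → 1 ≤ r → 3*m + 2 ≤ 4*r →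
      ((m : ℝ)/r ∈ {x : ℝ | ∃ m r : ℕ, 0 < m ∧ 0 < r ∧ ¬ Isym m ≤ I ^ r ∧
          x = (m : ℝ) / r}) := by
    intro m r hm hr hmr
    refine ⟨m, r, by omega, by omega, ?_, rfl⟩
    intro hle
    have := (part1 m r hm hr).1 hle
    omega
  have hne : Set.Nonempty {x : ℝ | ∃ m r : ℕ, 0 < m ∧ 0 < r ∧ ¬ Isym m ≤ I ^ r ∧
      x = (m : ℝ) / r} := ⟨(2:ℝ)/2, hmemS 2 2 (by omega) (by omega) (by omega)⟩
  have hlub : IsLUB {x : ℝ | ∃ m r : ℕ, 0 < m ∧ 0 < r ∧ ¬ Isym m ≤ I ^ r ∧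
      x = (m : ℝ) / r} (4/3) := by
    constructor
    · rintro x ⟨m, r, hm, hr, hnle, rfl⟩
      have h4r : 3*m + 2 ≤ 4*r := by
        by_contra hc
        exact hnle ((part1 m r (by omega) (by omega)).2 (by omega))
      have hrpos : (0:ℝ) < r := by exact_mod_cast hr
      rw [div_le_div_iff₀ hrpos (by norm_num : (0:ℝ) < 3)]
      exact_mod_cast (by omega : m * 3 ≤ 4 * r)
    · intro ub hub
      by_contra hlt
      push_neg at hlt
      set ε : ℝ := 4/3 - ub with hε
      have hεpos : 0 < ε := by simp [hε]; linarith
      obtain ⟨t, ht⟩ := exists_nat_gt ((2/3)/ε)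
      have hx := hub (hmemS (4*t+2) (3*t+2) (by omega) (by omega) (by omega))
      -- hx : (4t+2)/(3t+2) ≤ ub
      have hden : (0:ℝ) < (3*t+2 : ℕ) := by positivity
      rw [div_le_iff₀ hden] at hx
      have ht2 : (2/3 : ℝ) < ε * ((3*t+2 : ℕ) : ℝ) := by
        have h1 : ((2/3)/ε) < (t:ℝ) := ht
        have h2 : (2/3 : ℝ) < ε * t := by
          rw [div_lt_iff₀ hεpos] at h1
          linarith
        have h3 : (t : ℝ) ≤ ((3*t+2 : ℕ) : ℝ) := by
          push_cast
          linarith [Nat.cast_nonneg (α := ℝ) t]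
        nlinarith
      have hc1 : ((4*t+2 : ℕ) : ℝ) = 4*(t:ℝ)+2 := by push_cast; ring
      have hc2 : ((3*t+2 : ℕ) : ℝ) = 3*(t:ℝ)+2 := by push_cast; ring
      rw [hc1, hc2] at hx
      rw [hc2] at ht2
      have hub' : ub = 4/3 - ε := by rw [hε]; ring
      rw [hub'] at hx
      nlinarith
  exact hlub.csSup_eq hne
end

section
/- Let I be the ideal of a nearly-complete intersection and α, β positive integers with at least one even. Then I^(α+β) = I^(α) · I^(β). Moreover if both α and β are odd, then I^(α)·I^(β) is strictly contained in I^(α+β). -/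
open MvPolynomial Finset

noncomputable section
namespace NCI18

variable {K : Type*} [Field K]

local notation "R3" => MvPolynomial (Fin 3) K

def Pxy (K : Type*) [Field K] : Ideal (MvPolynomial (Fin 3) K) := Ideal.span {X 0, X 1}

lemma mem_Pxy_support {f : R3} (hf : f ∈ Pxy K) :
    ∀ d ∈ f.support, 1 ≤ d 0 + d 1 := by
  rw [Pxy, Ideal.mem_span_pair] at hf
  obtain ⟨u, v, rfl⟩ := hf
  intro d hd
  have := MvPolynomial.support_add hd
  rcases Finset.mem_union.1 this with h | h
  · have h2 := MvPolynomial.support_mul _ _ h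
    rw [Finset.mem_add] at h2
    obtain ⟨a, ha, b, hb, rfl⟩ := h2
    rw [MvPolynomial.support_X] at hb
    simp only [Finset.mem_singleton] at hb
    subst hb
    simp only [Finsupp.add_apply]
    simp
    try omega
  · have h2 := MvPolynomial.support_mul _ _ h
    rw [Finset.mem_add] at h2
    obtain ⟨a, ha, b, hb, rfl⟩ := h2
    rw [MvPolynomial.support_X] at hb
    simp only [Finset.mem_singleton] at hb
    subst hb
    simp only [Finsupp.add_apply]
    simp
    try omega

lemma Pxy_pow_support {s : ℕ} {f : R3} (hf : f ∈ Pxy K ^ s) :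
    ∀ d ∈ f.support, s ≤ d 0 + d 1 := by
  induction s generalizing f with
  | zero => intro d hd; exact Nat.zero_le _
  | succ s ih =>
    rw [pow_succ] at hf
    refine Submodule.mul_induction_on hf ?_ ?_
    · intro a ha b hb d hd
      have h2 := MvPolynomial.support_mul _ _ hd
      rw [Finset.mem_add] at h2
      obtain ⟨da, hda, db, hdb, rfl⟩ := h2
      have h3 := ih ha da hda
      have h4 := mem_Pxy_support hb db hdb
      simp only [Finsupp.add_apply]
      omega
    · intro p q hp hq d hd
      rcases Finset.mem_union.1 (MvPolynomial.support_add hd) with h | h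
      · exact hp d h
      · exact hq d h

lemma monomial_mem_Pxy_pow {s : ℕ} {d : Fin 3 →₀ ℕ} {c : K} (h : s ≤ d 0 + d 1) :
    (monomial d c : R3) ∈ Pxy K ^ s := by
  have hX0 : (X 0 : R3) ∈ Pxy K := Ideal.subset_span (by simp)
  have hX1 : (X 1 : R3) ∈ Pxy K := Ideal.subset_span (by simp)
  have key : (X 0 : R3) ^ (d 0) * X 1 ^ (d 1) ∈ Pxy K ^ (d 0 + d 1) := by
    rw [pow_add]
    exact Ideal.mul_mem_mul (Ideal.pow_mem_pow hX0 _) (Ideal.pow_mem_pow hX1 _)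
  have key2 : (X 0 : R3) ^ (d 0) * X 1 ^ (d 1) ∈ Pxy K ^ s :=
    Ideal.pow_le_pow_right h key
  have hmon : (monomial d c : R3) = (C c * X 2 ^ (d 2)) * (X 0 ^ (d 0) * X 1 ^ (d 1)) := by
    rw [monomial_eq, Finsupp.prod_pow, Fin.prod_univ_three]
    ring
  rw [hmon]
  exact Ideal.mul_mem_left _ _ key2

lemma mem_Pxy_pow_iff {s : ℕ} {f : R3} :
    f ∈ Pxy K ^ s ↔ ∀ d ∈ f.support, s ≤ d 0 + d 1 := by
  constructor
  · exact Pxy_pow_support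
  · intro h
    rw [MvPolynomial.as_sum f]
    exact Ideal.sum_mem _ fun d hd => monomial_mem_Pxy_pow (h d hd)

-- the big exponent finsupp
def Ee (k e : ℕ) : Fin 3 →₀ ℕ :=
  Finsupp.single 0 k + Finsupp.single 1 k + Finsupp.single 2 e

lemma Ee_apply0 (k e : ℕ) : Ee k e 0 = k := by simp [Ee]
lemma Ee_apply1 (k e : ℕ) : Ee k e 1 = k := by simp [Ee]
lemma Ee_apply2 (k e : ℕ) : Ee k e 2 = e := by simp [Ee]

lemma xy_z_pow_eq (k e : ℕ) :
    ((X 0 * X 1 : R3)) ^ k * (X 2) ^ e = monomial (Ee k e) 1 := by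
  rw [mul_pow, X_pow_eq_monomial, X_pow_eq_monomial, X_pow_eq_monomial,
    monomial_mul, monomial_mul, Ee]
  simp

lemma neg_z_pow_eq (k e n : ℕ) :
    ((X 0 * X 1 : R3)) ^ k * (-(X 2) ^ n) ^ e
      = ((-1 : K) ^ e) • monomial (Ee k (n * e)) 1 := by
  rw [neg_pow, ← xy_z_pow_eq, ← pow_mul]
  rw [smul_eq_C_mul, map_pow, map_neg, map_one]
  ring_nf

-- support of p * monomial
lemma support_mul_monomial_subset (p : R3) (E : Fin 3 →₀ ℕ) {d : Fin 3 →₀ ℕ}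
    (hd : d ∈ (p * monomial E 1).support) : ∃ d' ∈ p.support, d = d' + E := by
  rw [mem_support_iff, coeff_mul_monomial'] at hd
  split_ifs at hd with h
  · refine ⟨d - E, ?_, ?_⟩
    · rw [mem_support_iff]; intro h0; rw [h0] at hd; simp at hd
    · exact (tsub_add_cancel_of_le h).symm
  · simp at hd

lemma coeff_shift_monomial (p : R3) (E d : Fin 3 →₀ ℕ) :
    coeff (d + E) (p * monomial E 1) = coeff d p := by
  rw [coeff_mul_monomial, mul_one]

lemma coeff_term_of_low_z {p : R3} {k e n : ℕ} {d : Fin 3 →₀ ℕ} (hd : d 2 < n * e) :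
    coeff d (p * (((X 0 * X 1 : R3)) ^ k * (-(X 2) ^ n) ^ e)) = 0 := by
  rw [neg_z_pow_eq, mul_smul_comm, MvPolynomial.coeff_smul, coeff_mul_monomial']
  rw [if_neg]
  · simp
  · intro hle
    have := hle 2
    rw [Ee_apply2] at this
    omega

lemma coeff_term_shift (p : R3) (k e n : ℕ) (d : Fin 3 →₀ ℕ) :
    coeff (d + Ee k (n * e)) (p * (((X 0 * X 1 : R3)) ^ k * (-(X 2) ^ n) ^ e))
      = (-1) ^ e * coeff d p := by
  rw [neg_z_pow_eq, mul_smul_comm, MvPolynomial.coeff_smul, coeff_shift_monomial]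
  simp

lemma exists_z_div {f : R3} {c : ℕ} (hf : ∀ d ∈ f.support, c ≤ d 2) :
    ∃ g : R3, f = X 2 ^ c * g ∧ ∀ d, coeff d g = coeff (Finsupp.single 2 c + d) f := by
  refine ⟨f.divMonomial (Finsupp.single 2 c), ?_, fun d => coeff_divMonomial _ _ _⟩
  have hmod : f.modMonomial (Finsupp.single 2 c) = 0 := by
    ext d
    rcases le_or_gt c (d 2) with h | h
    · rw [coeff_modMonomial_of_le]
      · simp
      · rw [Finsupp.single_le_iff]; exact h
    · rw [coeff_modMonomial_of_not_le, coeff_zero]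
      · rw [← notMem_support_iff]
        intro hd
        exact absurd (hf d hd) (by omega)
      · rw [Finsupp.single_le_iff]; omega
  have := divMonomial_add_modMonomial f (Finsupp.single 2 c)
  rw [hmod, add_zero] at this
  rw [X_pow_eq_monomial]
  exact this.symm

lemma z_cancel {f : R3} {c s : ℕ} (hf : f * X 2 ^ c ∈ Pxy K ^ s) : f ∈ Pxy K ^ s := by
  rw [mem_Pxy_pow_iff] at hf ⊢
  intro d hd
  have h1 : coeff (d + Finsupp.single 2 c) (f * X 2 ^ c) = coeff d f := by
    rw [X_pow_eq_monomial, coeff_shift_monomial]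
  have h2 : (d + Finsupp.single 2 c) ∈ (f * X 2 ^ c).support := by
    rw [mem_support_iff, h1]
    exact mem_support_iff.1 hd
  have := hf _ h2
  simpa using this

/-! ### the homogeneous component in the (x,y)-grading -/

def comp (d : ℕ) (f : R3) : R3 :=
  ∑ m ∈ f.support.filter (fun m => m 0 + m 1 = d), monomial m (coeff m f)

lemma coeff_comp (d : ℕ) (f : R3) (e : Fin 3 →₀ ℕ) :
    coeff e (comp d f) = if e 0 + e 1 = d then coeff e f else 0 := by
  rw [comp, coeff_sum]
  simp_rw [coeff_monomial]
  rw [Finset.sum_ite_eq' (f.support.filter (fun m => m 0 + m 1 = d)) e]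
  by_cases h1 : e 0 + e 1 = d
  · by_cases h2 : e ∈ f.support
    · simp [h1, h2]
    · rw [notMem_support_iff] at h2
      simp [h1, h2]
  · simp [h1]

lemma comp_support (d : ℕ) (f : R3) :
    ∀ e ∈ (comp d f).support, e 0 + e 1 = d := by
  intro e he
  rw [mem_support_iff, coeff_comp] at he
  by_contra h
  simp [h] at he

lemma comp_mem_Pxy_pow (d : ℕ) (f : R3) : comp d f ∈ Pxy K ^ d := by
  rw [mem_Pxy_pow_iff]
  intro e he
  exact le_of_eq (comp_support d f e he).symm

lemma sub_comp_mem {d : ℕ} {f : R3} (hf : f ∈ Pxy K ^ d) :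
    f - comp d f ∈ Pxy K ^ (d + 1) := by
  rw [mem_Pxy_pow_iff] at hf ⊢
  intro e he
  rw [mem_support_iff, coeff_sub, coeff_comp] at he
  by_cases h1 : e 0 + e 1 = d
  · simp [h1] at he
  · have : coeff e f ≠ 0 := by
      intro h0; rw [h0] at he; simp at he
    have := hf e (mem_support_iff.2 this)
    omega

/-! ### Q-power representations -/

def vv (F : R3) (t k : ℕ) : R3 := (X 0 * X 1) ^ k * F ^ (t - k)

def Jmod (F : R3) (s t : ℕ) : Ideal R3 where
  carrier := {g | ∃ c : ℕ → R3, (∀ k, c k ∈ Pxy K ^ (s - 2*k)) ∧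
    g = ∑ k ∈ Finset.range (t+1), c k * vv F t k}
  zero_mem' := ⟨0, by simp, by simp⟩
  add_mem' := by
    rintro a b ⟨c, hc, rfl⟩ ⟨c', hc', rfl⟩
    exact ⟨c + c', fun k => add_mem (hc k) (hc' k),
      by simp [add_mul, Finset.sum_add_distrib]⟩
  smul_mem' := by
    rintro r a ⟨c, hc, rfl⟩
    refine ⟨fun k => r * c k, fun k => Ideal.mul_mem_left _ _ (hc k), ?_⟩
    rw [smul_eq_mul, Finset.mul_sum]
    simp [mul_assoc]

lemma mem_Jmod_single {F : R3} {s t k : ℕ} (hk : k ≤ t) {c : R3}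
    (hc : c ∈ Pxy K ^ (s - 2*k)) : c * vv F t k ∈ Jmod F s t := by
  refine ⟨fun k' => if k' = k then c else 0, ?_, ?_⟩
  · intro k'
    simp only
    split_ifs with h
    · subst h; exact hc
    · exact zero_mem _
  · rw [Finset.sum_congr rfl (g := fun k' => if k' = k then c * vv F t k' else 0)
      (fun k' _ => by simp only; split_ifs <;> simp)]
    rw [Finset.sum_ite_eq' (Finset.range (t+1)) k]
    simp [Finset.mem_range, Nat.lt_succ_iff, hk]

lemma vv_mul_xy {F : R3} {t k : ℕ} (hk : k ≤ t) :
    vv F t k * (X 0 * X 1) = vv F (t+1) (k+1) := by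
  rw [vv, vv, show t + 1 - (k+1) = t - k from by omega]
  ring

lemma vv_mul_F {F : R3} {t k : ℕ} (hk : k ≤ t) :
    vv F t k * F = vv F (t+1) k := by
  rw [vv, vv, show t + 1 - k = (t - k) + 1 from by omega, pow_succ]
  ring

lemma Jmod_zero_mul_xy {F : R3} {t : ℕ} {g : R3} (hg : g ∈ Jmod F 0 t) :
    g * (X 0 * X 1) ∈ Jmod F 0 (t+1) := by
  obtain ⟨c, hc, rfl⟩ := hg
  refine ⟨fun k => if k = 0 then 0 else c (k-1), fun k => by simp, ?_⟩
  show _ = ∑ k ∈ Finset.range (t+1+1), (if k = 0 then (0:MvPolynomial (Fin 3) K) else c (k-1)) * vv F (t+1) k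
  rw [Finset.sum_range_succ' (fun k => (if k = 0 then (0:MvPolynomial (Fin 3) K) else c (k-1)) * vv F (t+1) k) (t+1)]
  rw [show (if (0:ℕ) = 0 then (0:MvPolynomial (Fin 3) K) else c (0-1)) * vv F (t+1) 0 = 0
    from by simp, add_zero, Finset.sum_mul]
  refine Finset.sum_congr rfl (fun k hk => ?_)
  rw [Finset.mem_range, Nat.lt_succ_iff] at hk
  rw [show (if k+1 = 0 then (0:MvPolynomial (Fin 3) K) else c (k+1-1)) = c k from by simp,
    mul_assoc, vv_mul_xy hk]

lemma Jmod_zero_mul_F {F : R3} {t : ℕ} {g : R3} (hg : g ∈ Jmod F 0 t) :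
    g * F ∈ Jmod F 0 (t+1) := by
  obtain ⟨c, hc, rfl⟩ := hg
  refine ⟨fun k => if k = t + 1 then 0 else c k, fun k => by simp, ?_⟩
  show _ = ∑ k ∈ Finset.range (t+1+1), (if k = t+1 then (0:MvPolynomial (Fin 3) K) else c k) * vv F (t+1) k
  rw [Finset.sum_range_succ (fun k => (if k = t+1 then (0:MvPolynomial (Fin 3) K) else c k) * vv F (t+1) k) (t+1)]
  rw [show (if t+1 = t+1 then (0:MvPolynomial (Fin 3) K) else c (t+1)) * vv F (t+1) (t+1) = 0
    from by simp, add_zero, Finset.sum_mul]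
  refine Finset.sum_congr rfl (fun k hk => ?_)
  rw [Finset.mem_range] at hk
  rw [if_neg (show ¬ k = t+1 from by omega), mul_assoc, vv_mul_F (show k ≤ t from by omega)]

lemma Q_pow_rep (F : R3) (t : ℕ) {g : R3}
    (hg : g ∈ (Ideal.span {X 0 * X 1, F}) ^ t) : g ∈ Jmod F 0 t := by
  induction t generalizing g with
  | zero =>
    exact ⟨fun _ => g, by simp, by simp [vv]⟩
  | succ t ih =>
    rw [pow_succ] at hg
    refine Submodule.mul_induction_on hg ?_ (fun a b ha hb => add_mem ha hb)
    intro a ha b hb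
    rw [Ideal.mem_span_pair] at hb
    obtain ⟨u, w, rfl⟩ := hb
    have h1 : a * (u * (X 0 * X 1) + w * F) =
        u * (a * (X 0 * X 1)) + w * (a * F) := by ring
    rw [h1]
    exact add_mem (Ideal.mul_mem_left _ _ (Jmod_zero_mul_xy (ih ha)))
      (Ideal.mul_mem_left _ _ (Jmod_zero_mul_F (ih ha)))

lemma vv_mem_Q_pow (F : R3) {t k : ℕ} (hk : k ≤ t) :
    vv F t k ∈ (Ideal.span {X 0 * X 1, F}) ^ t := by
  have hxy : (X 0 * X 1 : R3) ∈ Ideal.span {X 0 * X 1, F} := Ideal.subset_span (by simp)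
  have hF : F ∈ Ideal.span {X 0 * X 1, F} := Ideal.subset_span (by simp)
  have : vv F t k ∈ (Ideal.span {X 0 * X 1, F}) ^ k * (Ideal.span {X 0 * X 1, F}) ^ (t - k) :=
    Ideal.mul_mem_mul (Ideal.pow_mem_pow hxy _) (Ideal.pow_mem_pow hF _)
  rwa [← pow_add, show k + (t - k) = t from by omega] at this

lemma Jmod_le_P_pow (F : R3) (s t : ℕ) : Jmod F s t ≤ Pxy K ^ s := by
  rintro g ⟨c, hc, rfl⟩
  refine Ideal.sum_mem _ (fun k _ => ?_)
  have h1 : c k * (X 0 * X 1) ^ k ∈ Pxy K ^ (s - 2*k) * Pxy K ^ (2*k) := by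
    refine Ideal.mul_mem_mul (hc k) ?_
    have : ((X 0 * X 1 : R3)) ^ k ∈ (Pxy K ^ 2) ^ k := by
      refine Ideal.pow_mem_pow ?_ _
      rw [pow_two]
      exact Ideal.mul_mem_mul (Ideal.subset_span (by simp)) (Ideal.subset_span (by simp))
    rwa [← pow_mul] at this
  rw [← pow_add] at h1
  have h2 : c k * (X 0 * X 1) ^ k ∈ Pxy K ^ s :=
    Ideal.pow_le_pow_right (by omega) h1
  rw [vv, ← mul_assoc]
  exact Ideal.mul_mem_right _ _ h2

lemma Jmod_le_Q_pow (F : R3) (s t : ℕ) :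
    Jmod F s t ≤ (Ideal.span {X 0 * X 1, F}) ^ t := by
  rintro g ⟨c, hc, rfl⟩
  refine Ideal.sum_mem _ (fun k hk => ?_)
  rw [Finset.mem_range, Nat.lt_succ_iff] at hk
  exact Ideal.mul_mem_left _ _ (vv_mem_Q_pow F hk)

/-! ### the syzygy lemma -/

lemma xy_mem_P2 : (X 0 * X 1 : R3) ∈ Pxy K ^ 2 := by
  rw [pow_two]
  exact Ideal.mul_mem_mul (Ideal.subset_span (by simp)) (Ideal.subset_span (by simp))

lemma xy_eq_monomial : (X 0 * X 1 : R3) = monomial (Ee 1 0) 1 := by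
  have := xy_z_pow_eq (K := K) 1 0
  simpa using this

lemma syz {n : ℕ} {F : R3} (hGP : F + X 2 ^ n ∈ Pxy K) (s t : ℕ) :
    ∀ r : ℕ, r ≤ t → 2*r ≤ s → ∀ π : ℕ → R3,
    (∀ k, k ≤ r → π k ∈ Pxy K ^ (s - 2*k)) →
    (∀ k, k ≤ r → ∀ d ∈ (π k).support, d 0 + d 1 = s - 2*k) →
    (∑ k ∈ Finset.range (r+1), π k * ((X 0 * X 1 : R3)^k * (-(X 2)^n)^(t-k)) = 0) →
    (∑ k ∈ Finset.range (r+1), π k * vv F t k) ∈ Jmod F (s+1) t := by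
  intro r
  induction r with
  | zero =>
    intro _ _ π _ _ heq
    rw [Finset.sum_range_one] at heq ⊢
    have hzne : (X 2 : R3) ≠ 0 := X_ne_zero _
    have hz : ((X 0 * X 1 : R3)^0 * (-(X 2)^n)^(t-0)) ≠ 0 := by
      simp only [pow_zero, one_mul]
      exact pow_ne_zero _ (neg_ne_zero.2 (pow_ne_zero _ hzne))
    rcases mul_eq_zero.1 heq with h | h
    · rw [h, zero_mul]; exact zero_mem _
    · exact absurd h hz
  | succ r ih =>
    intro hrt hrs π hmem hhom heq
    -- step 1 : the top coefficient is divisible by z^n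
    have hzdiv : ∀ d ∈ (π (r+1)).support, n ≤ d 2 := by
      intro d hd
      by_contra hlt
      push_neg at hlt
      have hpeel : π (r+1) * ((X 0 * X 1 : R3)^(r+1) * (-(X 2)^n)^(t-(r+1)))
          = - ∑ k ∈ Finset.range (r+1), π k * ((X 0 * X 1 : R3)^k * (-(X 2)^n)^(t-k)) := by
        rw [Finset.sum_range_succ] at heq
        linear_combination heq
      have hL : coeff (d + Ee (r+1) (n * (t-(r+1))))
          (π (r+1) * ((X 0 * X 1 : R3)^(r+1) * (-(X 2)^n)^(t-(r+1))))
          = (-1)^(t-(r+1)) * coeff d (π (r+1)) := coeff_term_shift _ _ _ _ _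
      have hR : coeff (d + Ee (r+1) (n * (t-(r+1))))
          (- ∑ k ∈ Finset.range (r+1), π k * ((X 0 * X 1 : R3)^k * (-(X 2)^n)^(t-k))) = 0 := by
        rw [coeff_neg, MvPolynomial.coeff_sum]
        rw [Finset.sum_eq_zero, neg_zero]
        intro k hk
        rw [Finset.mem_range, Nat.lt_succ_iff] at hk
        refine coeff_term_of_low_z ?_
        have h1 : (d + Ee (r+1) (n * (t-(r+1)))) 2 = d 2 + n * (t-(r+1)) := by
          simp [Ee_apply2]
        have h2 : t - r = (t - (r+1)) + 1 := by omega
        have h3 : n * (t - r) ≤ n * (t - k) := Nat.mul_le_mul_left n (by omega)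
        have h4 : n * (t - r) = n * (t - (r+1)) + n := by rw [h2, Nat.mul_succ]
        omega
      rw [hpeel, hR] at hL
      have hne0 : coeff d (π (r+1)) ≠ 0 := mem_support_iff.1 hd
      have hne : ((-1 : K))^(t-(r+1)) * coeff d (π (r+1)) ≠ 0 :=
        mul_ne_zero (pow_ne_zero _ (neg_ne_zero.2 one_ne_zero)) hne0
      exact hne hL.symm
    -- step 2 : divide by z^n
    obtain ⟨ρ, hρ1, hρ2⟩ := exists_z_div hzdiv
    have hρhom : ∀ d ∈ ρ.support, d 0 + d 1 = s - 2*(r+1) := by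
      intro d hd
      have h1 : coeff (Finsupp.single 2 n + d) (π (r+1)) ≠ 0 := by
        rw [← hρ2]; exact mem_support_iff.1 hd
      have h2 := hhom (r+1) le_rfl _ (mem_support_iff.2 h1)
      simpa using h2
    have hρmem : ρ ∈ Pxy K ^ (s - 2*(r+1)) := by
      rw [mem_Pxy_pow_iff]
      intro d hd
      exact le_of_eq (hρhom d hd).symm
    have hxyρmem : (X 0 * X 1) * ρ ∈ Pxy K ^ (s - 2*r) := by
      have h1 : (X 0 * X 1) * ρ ∈ Pxy K ^ 2 * Pxy K ^ (s - 2*(r+1)) :=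
        Ideal.mul_mem_mul xy_mem_P2 hρmem
      rw [← pow_add] at h1
      rwa [show 2 + (s - 2*(r+1)) = s - 2*r from by omega] at h1
    -- step 3 : modified coefficients
    obtain ⟨π', hπ'r, hπ'ne⟩ : ∃ π' : ℕ → R3,
        π' r = π r - (X 0 * X 1) * ρ ∧ ∀ j, j ≠ r → π' j = π j :=
      ⟨fun j => if j = r then π r - (X 0 * X 1) * ρ else π j,
        if_pos rfl, fun j hj => if_neg hj⟩
    have hmem' : ∀ k, k ≤ r → π' k ∈ Pxy K ^ (s - 2*k) := by
      intro k hk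
      rcases eq_or_ne k r with h | h
      · subst h
        rw [hπ'r]
        exact sub_mem (hmem k (by omega)) hxyρmem
      · rw [hπ'ne k h]
        exact hmem k (by omega)
    have hhom' : ∀ k, k ≤ r → ∀ d ∈ (π' k).support, d 0 + d 1 = s - 2*k := by
      intro k hk d hd
      rcases eq_or_ne k r with h | h
      · subst h
        rw [hπ'r] at hd
        rcases Finset.mem_union.1 (MvPolynomial.support_sub _ _ _ hd) with h1 | h1
        · exact hhom k (by omega) d h1
        · have h2 := MvPolynomial.support_mul _ _ h1
          rw [Finset.mem_add] at h2
          obtain ⟨a, ha, b, hb, rfl⟩ := h2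
          rw [xy_eq_monomial] at ha
          have ha2 := support_monomial_subset ha
          rw [Finset.mem_singleton] at ha2
          rename' ha2 => ha
          subst ha
          have hbb := hρhom b hb
          simp only [Finsupp.add_apply, Ee_apply0, Ee_apply1]
          omega
      · rw [hπ'ne k h] at hd
        exact hhom k (by omega) d hd
    have hkey : (X 0 * X 1) * ρ * ((X 0 * X 1 : R3)^r * (-(X 2)^n)^(t-r))
        = - (π (r+1) * ((X 0 * X 1 : R3)^(r+1) * (-(X 2)^n)^(t-(r+1)))) := by
      rw [hρ1, show t - r = (t - (r+1)) + 1 from by omega, pow_succ]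
      ring
    have hcongr : ∑ k ∈ Finset.range r, π' k * ((X 0 * X 1 : R3)^k * (-(X 2)^n)^(t-k))
        = ∑ k ∈ Finset.range r, π k * ((X 0 * X 1 : R3)^k * (-(X 2)^n)^(t-k)) :=
      Finset.sum_congr rfl (fun j hj => by
        rw [Finset.mem_range] at hj
        rw [hπ'ne j (by omega)])
    have heq' : ∑ k ∈ Finset.range (r+1), π' k * ((X 0 * X 1 : R3)^k * (-(X 2)^n)^(t-k)) = 0 := by
      rw [Finset.sum_range_succ, hπ'r, hcongr]
      rw [Finset.sum_range_succ, Finset.sum_range_succ] at heq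
      rw [sub_mul, hkey]
      linear_combination heq
    -- step 4 : apply IH
    have hIH := ih (by omega) (by omega) π' hmem' hhom' heq'
    -- step 5 : assemble
    have hres : (ρ * (F + X 2 ^ n)) ∈ Pxy K ^ (s + 1 - 2*(r+1)) := by
      have h1 : ρ * (F + X 2 ^ n) ∈ Pxy K ^ (s - 2*(r+1)) * Pxy K ^ 1 := by
        refine Ideal.mul_mem_mul hρmem ?_
        rwa [pow_one]
      rw [← pow_add] at h1
      rwa [show s - 2*(r+1) + 1 = s + 1 - 2*(r+1) from by omega] at h1
    have hresJ : (ρ * (F + X 2 ^ n)) * vv F t (r+1) ∈ Jmod F (s+1) t :=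
      mem_Jmod_single hrt hres
    have hfinal : ∑ k ∈ Finset.range (r+1+1), π k * vv F t k
        = (∑ k ∈ Finset.range (r+1), π' k * vv F t k)
          + (ρ * (F + X 2 ^ n)) * vv F t (r+1) := by
      have hcongr2 : ∑ k ∈ Finset.range r, π' k * vv F t k
          = ∑ k ∈ Finset.range r, π k * vv F t k :=
        Finset.sum_congr rfl (fun j hj => by
          rw [Finset.mem_range] at hj
          rw [hπ'ne j (by omega)])
      rw [Finset.sum_range_succ _ (r+1), Finset.sum_range_succ _ r, Finset.sum_range_succ _ r]
      rw [hcongr2, hπ'r, hρ1]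
      have h1 : vv F t r = (X 0 * X 1)^r * F^(t-(r+1)) * F := by
        rw [vv, show t - r = (t-(r+1)) + 1 from by omega, pow_succ]
        ring
      have h2 : vv F t (r+1) = (X 0 * X 1)^(r+1) * F^(t-(r+1)) := rfl
      rw [h1, h2, pow_succ]
      ring
    rw [hfinal]
    exact add_mem hIH hresJ

lemma F_pow_sub_mem {n : ℕ} {F : R3} (hGP : F + X 2 ^ n ∈ Pxy K) (u : ℕ) :
    F ^ u - (-(X 2)^n) ^ u ∈ Pxy K := by
  obtain ⟨c, hc⟩ := sub_dvd_pow_sub_pow F (-(X 2)^n) u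
  rw [hc, sub_neg_eq_add]
  exact Ideal.mul_mem_right _ _ hGP

lemma support_term_subset {p : R3} {k e n : ℕ} {d : Fin 3 →₀ ℕ}
    (hd : d ∈ (p * (((X 0 * X 1 : R3)) ^ k * (-(X 2) ^ n) ^ e)).support) :
    ∃ d' ∈ p.support, d = d' + Ee k (n * e) := by
  rw [neg_z_pow_eq, mul_smul_comm] at hd
  rw [mem_support_iff, MvPolynomial.coeff_smul] at hd
  have h1 : coeff d (p * monomial (Ee k (n * e)) 1) ≠ 0 := fun h => hd (by rw [h, smul_zero])
  exact support_mul_monomial_subset _ _ (mem_support_iff.2 h1)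

theorem struct {n : ℕ} {F : R3} (hGP : F + X 2 ^ n ∈ Pxy K) (s t : ℕ) :
    Pxy K ^ s ⊓ (Ideal.span {X 0 * X 1, F}) ^ t = Jmod F s t := by
  refine le_antisymm ?_ (le_inf (Jmod_le_P_pow F s t) (Jmod_le_Q_pow F s t))
  induction s with
  | zero =>
    rintro g ⟨-, hg2⟩
    exact Q_pow_rep F t hg2
  | succ s ihs =>
    rintro g ⟨hg1, hg2⟩
    have hg1' : g ∈ Pxy K ^ s := Ideal.pow_le_pow_right (Nat.le_succ s) hg1
    obtain ⟨c, hc, rfl⟩ := ihs ⟨hg1', hg2⟩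
    set g := ∑ k ∈ Finset.range (t+1), c k * vv F t k with hg
    set r := min t (s / 2) with hr
    have hrt : r ≤ t := min_le_left _ _
    have hrs : 2 * r ≤ s := by omega
    -- the tail sum
    have hsplit : g = (∑ k ∈ Finset.range (r+1), c k * vv F t k)
        + ∑ k ∈ Finset.Ico (r+1) (t+1), c k * vv F t k := by
      rw [hg, Finset.range_eq_Ico, Finset.range_eq_Ico]
      exact (Finset.sum_Ico_consecutive (fun k => c k * vv F t k) (Nat.zero_le (r+1)) (show r+1 ≤ t+1 by omega)).symm
    have hS2 : ∑ k ∈ Finset.Ico (r+1) (t+1), c k * vv F t k ∈ Jmod F (s+1) t := by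
      refine Ideal.sum_mem _ (fun k hk => ?_)
      rw [Finset.mem_Ico] at hk
      refine mem_Jmod_single (by omega) ?_
      have h2k : s + 1 - 2*k = 0 := by omega
      rw [h2k, pow_zero, Ideal.one_eq_top]
      exact Submodule.mem_top
    -- split heads into low part and homogeneous part
    have hchat : ∀ k, k ≤ r → c k - comp (s - 2*k) (c k) ∈ Pxy K ^ (s + 1 - 2*k) := by
      intro k hk
      have := sub_comp_mem (hc k)
      rwa [show s - 2*k + 1 = s + 1 - 2*k from by omega] at this
    have hS1a : ∑ k ∈ Finset.range (r+1), (c k - comp (s - 2*k) (c k)) * vv F t k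
        ∈ Jmod F (s+1) t :=
      Ideal.sum_mem _ (fun k hk => mem_Jmod_single
        (by rw [Finset.mem_range] at hk; omega)
        (hchat k (by rw [Finset.mem_range] at hk; omega)))
    have hS1split : ∑ k ∈ Finset.range (r+1), c k * vv F t k
        = (∑ k ∈ Finset.range (r+1), (c k - comp (s - 2*k) (c k)) * vv F t k)
          + ∑ k ∈ Finset.range (r+1), comp (s - 2*k) (c k) * vv F t k := by
      rw [← Finset.sum_add_distrib]
      refine Finset.sum_congr rfl (fun k hk => ?_)
      ring
    -- the homogeneous part lies in P^{s+1}
    have hC : ∑ k ∈ Finset.range (r+1), comp (s - 2*k) (c k) * vv F t k ∈ Pxy K ^ (s+1) := by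
      have h1 : ∑ k ∈ Finset.Ico (r+1) (t+1), c k * vv F t k ∈ Pxy K ^ (s+1) :=
        Jmod_le_P_pow F (s+1) t hS2
      have h2 : ∑ k ∈ Finset.range (r+1), (c k - comp (s - 2*k) (c k)) * vv F t k
          ∈ Pxy K ^ (s+1) := Jmod_le_P_pow F (s+1) t hS1a
      have h3 : ∑ k ∈ Finset.range (r+1), comp (s - 2*k) (c k) * vv F t k
          = g - (∑ k ∈ Finset.Ico (r+1) (t+1), c k * vv F t k)
            - ∑ k ∈ Finset.range (r+1), (c k - comp (s - 2*k) (c k)) * vv F t k := by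
        rw [hsplit, hS1split]; ring
      rw [h3]
      exact sub_mem (sub_mem hg1 h1) h2
    -- compare with the monomial part
    have hCH : ∑ k ∈ Finset.range (r+1), comp (s - 2*k) (c k) * vv F t k
        - ∑ k ∈ Finset.range (r+1), comp (s - 2*k) (c k)
            * ((X 0 * X 1 : R3)^k * (-(X 2)^n)^(t-k)) ∈ Pxy K ^ (s+1) := by
      rw [← Finset.sum_sub_distrib]
      refine Ideal.sum_mem _ (fun k hk => ?_)
      rw [Finset.mem_range, Nat.lt_succ_iff] at hk
      have hterm : comp (s - 2*k) (c k) * vv F t k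
          - comp (s - 2*k) (c k) * ((X 0 * X 1 : R3)^k * (-(X 2)^n)^(t-k))
          = comp (s - 2*k) (c k) * (X 0 * X 1 : R3)^k
            * (F^(t-k) - (-(X 2)^n)^(t-k)) := by
        rw [vv]; ring
      rw [hterm]
      have hxyk : ((X 0 * X 1 : R3))^k ∈ Pxy K ^ (2*k) := by
        have := Ideal.pow_mem_pow (xy_mem_P2 (K := K)) k
        rwa [← pow_mul] at this
      have h1 : comp (s - 2*k) (c k) * (X 0 * X 1 : R3)^k
            * (F^(t-k) - (-(X 2)^n)^(t-k))
          ∈ Pxy K ^ (s - 2*k) * Pxy K ^ (2*k) * Pxy K ^ 1 := by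
        refine Ideal.mul_mem_mul (Ideal.mul_mem_mul (comp_mem_Pxy_pow _ _) hxyk) ?_
        rw [pow_one]
        exact F_pow_sub_mem hGP _
      rw [← pow_add, ← pow_add] at h1
      rwa [show s - 2*k + 2*k + 1 = s + 1 from by omega] at h1
    have hH : ∑ k ∈ Finset.range (r+1), comp (s - 2*k) (c k)
        * ((X 0 * X 1 : R3)^k * (-(X 2)^n)^(t-k)) ∈ Pxy K ^ (s+1) := by
      have := sub_mem hC hCH
      simpa using this
    -- it is homogeneous of degree s, hence zero
    have hH0 : ∑ k ∈ Finset.range (r+1), comp (s - 2*k) (c k)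
        * ((X 0 * X 1 : R3)^k * (-(X 2)^n)^(t-k)) = 0 := by
      by_contra hne
      obtain ⟨d, hd⟩ := Finset.nonempty_of_ne_empty
        (fun h => hne (support_eq_empty.1 h))
      have h1 : s + 1 ≤ d 0 + d 1 := Pxy_pow_support hH d hd
      have h2 : coeff d (∑ k ∈ Finset.range (r+1), comp (s - 2*k) (c k)
          * ((X 0 * X 1 : R3)^k * (-(X 2)^n)^(t-k))) ≠ 0 := mem_support_iff.1 hd
      rw [MvPolynomial.coeff_sum] at h2
      obtain ⟨k, hk, hck⟩ := Finset.exists_ne_zero_of_sum_ne_zero h2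
      rw [Finset.mem_range, Nat.lt_succ_iff] at hk
      obtain ⟨d', hd', rfl⟩ := support_term_subset (mem_support_iff.2 hck)
      have h3 := comp_support (s - 2*k) (c k) d' hd'
      have h4 : (d' + Ee k (n * (t-k))) 0 + (d' + Ee k (n * (t-k))) 1
          = (s - 2*k) + 2*k := by
        simp only [Finsupp.add_apply, Ee_apply0, Ee_apply1]
        omega
      omega
    -- apply the syzygy lemma
    have hsyz := syz hGP s t r hrt hrs (fun k => comp (s - 2*k) (c k))
      (fun k _ => comp_mem_Pxy_pow _ _) (fun k _ => comp_support _ _) hH0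
    rw [hsplit, hS1split]
    exact add_mem (add_mem hS1a hsyz) hS2

/-! ### arithmetic splitting -/

lemma arith_split_even {a β k : ℕ} (hk : k ≤ (a + a) + β) :
    ∃ k1 k2 e1 e2 : ℕ, k1 + k2 = k ∧ k1 ≤ a + a ∧ k2 ≤ β ∧
      e1 + e2 = ((a+a) + β) - 2*k ∧ (a+a) ≤ 2*k1 + e1 ∧ β ≤ 2*k2 + e2 := by
  rcases le_or_gt (2*k) ((a+a)+β) with h | h
  · rcases le_or_gt k a with h2 | h2
    · exact ⟨k, 0, (a+a) - 2*k, β, by omega, by omega, by omega, by omega, by omega, by omega⟩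
    · exact ⟨a, k - a, 0, ((a+a)+β) - 2*k, by omega, by omega, by omega, by omega,
        by omega, by omega⟩
  · refine ⟨min (a+a) (max a (k - β)), k - min (a+a) (max a (k - β)), 0, 0,
      by omega, by omega, by omega, by omega, by omega, by omega⟩

lemma arith_split {α β k : ℕ} (h : Even α ∨ Even β) (hk : k ≤ α + β) :
    ∃ k1 k2 e1 e2 : ℕ, k1 + k2 = k ∧ k1 ≤ α ∧ k2 ≤ β ∧
      e1 + e2 = (α + β) - 2*k ∧ α ≤ 2*k1 + e1 ∧ β ≤ 2*k2 + e2 := by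
  rcases h with h | h
  · obtain ⟨a, rfl⟩ := h
    exact arith_split_even hk
  · obtain ⟨b, rfl⟩ := h
    obtain ⟨k1, k2, e1, e2, h1, h2, h3, h4, h5, h6⟩ :=
      arith_split_even (a := b) (β := α) (k := k) (by omega)
    exact ⟨k2, k1, e2, e1, by omega, h3, h2, by omega, h6, h5⟩

/-! ### membership of generators in products -/

lemma factor_mem {F : R3} {γ k1 e1 : ℕ} (hk1 : k1 ≤ γ) (he1 : γ ≤ 2*k1 + e1)
    {p : R3} (hp : p ∈ Pxy K ^ e1) :
    p * vv F γ k1 ∈ Pxy K ^ γ ⊓ (Ideal.span {X 0 * X 1, F}) ^ γ := by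
  constructor
  · have hxyk : ((X 0 * X 1 : R3))^k1 ∈ Pxy K ^ (2*k1) := by
      have := Ideal.pow_mem_pow (xy_mem_P2 (K := K)) k1
      rwa [← pow_mul] at this
    have h1 : p * (X 0 * X 1 : R3)^k1 ∈ Pxy K ^ e1 * Pxy K ^ (2*k1) :=
      Ideal.mul_mem_mul hp hxyk
    rw [← pow_add] at h1
    have h2 : p * (X 0 * X 1 : R3)^k1 ∈ Pxy K ^ γ :=
      Ideal.pow_le_pow_right (by omega) h1
    rw [vv, ← mul_assoc]
    exact Ideal.mul_mem_right _ _ h2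
  · exact Ideal.mul_mem_left _ _ (vv_mem_Q_pow F hk1)

lemma term_mem_mul {F : R3} {α β k : ℕ} (h : Even α ∨ Even β)
    (hk : k ≤ α + β) {c : R3} (hc : c ∈ Pxy K ^ ((α + β) - 2*k)) :
    c * vv F (α + β) k ∈
      (Pxy K ^ α ⊓ (Ideal.span {X 0 * X 1, F}) ^ α) *
      (Pxy K ^ β ⊓ (Ideal.span {X 0 * X 1, F}) ^ β) := by
  obtain ⟨k1, k2, e1, e2, h1, h2, h3, h4, h5, h6⟩ := arith_split h hk
  rw [show (α + β) - 2*k = e1 + e2 from by omega, pow_add] at hc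
  have hvv : vv F (α + β) k = vv F α k1 * vv F β k2 := by
    rw [vv, vv, vv, show (α+β) - k = (α - k1) + (β - k2) from by omega, ← h1]
    rw [pow_add, pow_add]
    ring
  refine Submodule.mul_induction_on hc ?_ ?_
  · intro p hp q hq
    have heq : (p * q) * vv F (α + β) k = (p * vv F α k1) * (q * vv F β k2) := by
      rw [hvv]; ring
    rw [heq]
    exact Ideal.mul_mem_mul (factor_mem h2 h5 hp) (factor_mem h3 h6 hq)
  · intro x y hx hy
    rw [add_mul]
    exact add_mem hx hy

lemma mul_le_inf_pow {F : R3} (α β : ℕ) :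
    (Pxy K ^ α ⊓ (Ideal.span {X 0 * X 1, F}) ^ α) *
      (Pxy K ^ β ⊓ (Ideal.span {X 0 * X 1, F}) ^ β)
    ≤ Pxy K ^ (α + β) ⊓ (Ideal.span {X 0 * X 1, F}) ^ (α + β) := by
  refine Ideal.mul_le.2 (fun u hu v hv => ?_)
  constructor
  · rw [pow_add]
    exact Ideal.mul_mem_mul hu.1 hv.1
  · rw [pow_add]
    exact Ideal.mul_mem_mul hu.2 hv.2

theorem even_case {n : ℕ} {F : R3} (hGP : F + X 2 ^ n ∈ Pxy K) {α β : ℕ}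
    (h : Even α ∨ Even β) :
    Pxy K ^ (α + β) ⊓ (Ideal.span {X 0 * X 1, F}) ^ (α + β)
      = (Pxy K ^ α ⊓ (Ideal.span {X 0 * X 1, F}) ^ α) *
        (Pxy K ^ β ⊓ (Ideal.span {X 0 * X 1, F}) ^ β) := by
  refine le_antisymm ?_ (mul_le_inf_pow α β)
  rw [struct hGP (α + β) (α + β)]
  rintro g ⟨c, hc, rfl⟩
  refine Ideal.sum_mem _ (fun k hk => ?_)
  rw [Finset.mem_range, Nat.lt_succ_iff] at hk
  exact term_mem_mul h hk (hc k)

/-! ### the odd case -/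

lemma degree_eq_three (d : Fin 3 →₀ ℕ) : d.degree = d 0 + d 1 + d 2 := by
  have h1 : d.degree = ∑ i : Fin 3, d i := by
    rw [Finsupp.degree]
    exact Finset.sum_subset (Finset.subset_univ _)
      (fun i _ hi => Finsupp.notMem_support_iff.1 hi)
  rw [h1, Fin.sum_univ_three]

lemma F_pow_deg {n : ℕ} {F : R3} (hFh : F.IsHomogeneous n) (u : ℕ) :
    ∀ d ∈ (F ^ u).support, d 0 + d 1 + d 2 = n * u := by
  intro d hd
  have h1 := hFh.pow u
  by_contra h
  exact mem_support_iff.1 hd (h1.coeff_eq_zero (by rw [degree_eq_three]; exact h))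

lemma xy_pow_eq_monomial (j : ℕ) : ((X 0 * X 1 : R3)) ^ j = monomial (Ee j 0) 1 := by
  have := xy_z_pow_eq (K := K) j 0
  simpa using this

lemma Ee_split (j e : ℕ) : Ee j e = Finsupp.single 2 e + Ee j 0 := by
  ext i
  fin_cases i <;> simp [Ee]

lemma coeff_w {n : ℕ} {F : R3} (hGP : F + X 2 ^ n ∈ Pxy K) (j : ℕ) :
    coeff (Ee j (n*j)) ((X 0 * X 1 : R3) ^ j * F ^ j) = (-1 : K) ^ j := by
  have h1 : ((X 0 * X 1 : R3) ^ j * F ^ j) = F ^ j * monomial (Ee j 0) 1 := by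
    rw [xy_pow_eq_monomial]; ring
  rw [h1, Ee_split, coeff_shift_monomial]
  have h3 : F ^ j = (F ^ j - (-(X 2)^n) ^ j) + (-(X 2)^n) ^ j := by ring
  rw [h3, coeff_add]
  have h4 : coeff (Finsupp.single 2 (n*j)) (F ^ j - (-(X 2)^n) ^ j) = 0 := by
    by_contra h
    have h5 := mem_Pxy_support (F_pow_sub_mem hGP j) _ (mem_support_iff.2 h)
    simp at h5
  rw [h4, zero_add]
  have h6 : ((-(X 2 : R3))^n) ^ j = ((X 0 * X 1 : R3))^0 * ((-(X 2))^n) ^ j := by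
    rw [pow_zero, one_mul]
  have h7 : ((-(X 2 : R3)^n)) ^ j = ((-1 : K) ^ j) • monomial (Ee 0 (n * j)) 1 := by
    have := neg_z_pow_eq (K := K) 0 j n
    simpa using this
  rw [h7, MvPolynomial.coeff_smul, coeff_monomial,
    if_pos (by ext i; fin_cases i <;> simp [Ee])]
  simp

lemma w_mem {F : R3} (j : ℕ) :
    (X 0 * X 1 : R3) ^ j * F ^ j ∈
      Pxy K ^ (2*j) ⊓ (Ideal.span {X 0 * X 1, F}) ^ (2*j) := by
  constructor
  · have h1 : ((X 0 * X 1 : R3))^j ∈ Pxy K ^ (2*j) := by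
      have := Ideal.pow_mem_pow (xy_mem_P2 (K := K)) j
      rwa [← pow_mul] at this
    exact Ideal.mul_mem_right _ _ h1
  · have hxy : (X 0 * X 1 : R3) ∈ Ideal.span {X 0 * X 1, F} := Ideal.subset_span (by simp)
    have hF : F ∈ Ideal.span {X 0 * X 1, F} := Ideal.subset_span (by simp)
    have h1 : (X 0 * X 1 : R3) ^ j * F ^ j ∈
        (Ideal.span {X 0 * X 1, F}) ^ j * (Ideal.span {X 0 * X 1, F}) ^ j :=
      Ideal.mul_mem_mul (Ideal.pow_mem_pow hxy _) (Ideal.pow_mem_pow hF _)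
    rwa [← pow_add, show j + j = 2*j from by omega] at h1

lemma coeff_prod_zero {n : ℕ} {F : R3} (hGP : F + X 2 ^ n ∈ Pxy K)
    (hFh : F.IsHomogeneous n) (hn : 1 ≤ n) {α β j : ℕ}
    (hα : Odd α) (hβ : Odd β) (hj : α + β = 2*j) :
    ∀ g ∈ (Pxy K ^ α ⊓ (Ideal.span {X 0 * X 1, F}) ^ α) *
      (Pxy K ^ β ⊓ (Ideal.span {X 0 * X 1, F}) ^ β),
      coeff (Ee j (n*j)) g = 0 := by
  intro g hg
  rw [struct hGP α α, struct hGP β β] at hg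
  refine Submodule.mul_induction_on hg ?_ ?_
  swap
  · intro x y hx hy
    rw [coeff_add, hx, hy, add_zero]
  rintro u ⟨cu, hcu, rfl⟩ v ⟨cv, hcv, rfl⟩
  rw [Finset.sum_mul_sum, MvPolynomial.coeff_sum]
  refine Finset.sum_eq_zero (fun k1 hk1 => ?_)
  rw [MvPolynomial.coeff_sum]
  refine Finset.sum_eq_zero (fun k2 hk2 => ?_)
  rw [Finset.mem_range, Nat.lt_succ_iff] at hk1 hk2
  have hrw : cu k1 * vv F α k1 * (cv k2 * vv F β k2)
      = (cu k1 * cv k2) * ((X 0 * X 1 : R3) ^ (k1 + k2) * F ^ ((α - k1) + (β - k2))) := by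
    rw [vv, vv, pow_add, pow_add]
    ring
  rw [hrw]
  by_contra hne
  obtain ⟨dp, hdp, dr, hdr, heq⟩ := Finset.mem_add.1
    (MvPolynomial.support_mul _ _ (mem_support_iff.2 hne))
  obtain ⟨du, hdu, dv, hdv, heq2⟩ := Finset.mem_add.1
    (MvPolynomial.support_mul _ _ hdp)
  rw [xy_pow_eq_monomial] at hdr
  obtain ⟨dm, hdm, dF, hdF, heq3⟩ := Finset.mem_add.1
    (MvPolynomial.support_mul _ _ hdr)
  have hdm2 : dm = Ee (k1+k2) 0 :=
    Finset.mem_singleton.1 (support_monomial_subset hdm)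
  subst hdm2
  -- extract numerical relations
  have hu := Pxy_pow_support (hcu k1) du hdu
  have hv := Pxy_pow_support (hcv k2) dv hdv
  have hF3 := F_pow_deg hFh _ dF hdF
  have e0 : du 0 + dv 0 + ((k1+k2) + dF 0) = j := by
    have h := congrArg (fun f : Fin 3 →₀ ℕ => f 0) heq
    have h2 := congrArg (fun f : Fin 3 →₀ ℕ => f 0) heq2
    have h3 := congrArg (fun f : Fin 3 →₀ ℕ => f 0) heq3
    simp only [Finsupp.add_apply, Ee_apply0] at h h2 h3
    omega
  have e1 : du 1 + dv 1 + ((k1+k2) + dF 1) = j := by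
    have h := congrArg (fun f : Fin 3 →₀ ℕ => f 1) heq
    have h2 := congrArg (fun f : Fin 3 →₀ ℕ => f 1) heq2
    have h3 := congrArg (fun f : Fin 3 →₀ ℕ => f 1) heq3
    simp only [Finsupp.add_apply, Ee_apply1] at h h2 h3
    omega
  have e2 : du 2 + dv 2 + dF 2 = n * j := by
    have h := congrArg (fun f : Fin 3 →₀ ℕ => f 2) heq
    have h2 := congrArg (fun f : Fin 3 →₀ ℕ => f 2) heq2
    have h3 := congrArg (fun f : Fin 3 →₀ ℕ => f 2) heq3
    simp only [Finsupp.add_apply, Ee_apply2] at h h2 h3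
    omega
  obtain ⟨a', ha'⟩ := hα
  obtain ⟨b', hb'⟩ := hβ
  rcases lt_trichotomy (k1 + k2) j with hkj | hkj | hkj
  · -- k < j
    have hup : j < (α - k1) + (β - k2) := by omega
    have hmul := Nat.mul_le_mul_left n (show j + 1 ≤ (α - k1) + (β - k2) from hup)
    have hms : n * (j + 1) = n * j + n := Nat.mul_succ n j
    omega
  · -- k = j
    omega
  · -- k > j
    omega

theorem odd_case {n : ℕ} {F : R3} (hGP : F + X 2 ^ n ∈ Pxy K)
    (hFh : F.IsHomogeneous n) (hn : 1 ≤ n) {α β : ℕ} (hα : Odd α) (hβ : Odd β) :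
    (Pxy K ^ α ⊓ (Ideal.span {X 0 * X 1, F}) ^ α) *
      (Pxy K ^ β ⊓ (Ideal.span {X 0 * X 1, F}) ^ β)
    < Pxy K ^ (α + β) ⊓ (Ideal.span {X 0 * X 1, F}) ^ (α + β) := by
  refine lt_of_le_of_ne (mul_le_inf_pow α β) (fun hEq => ?_)
  obtain ⟨a', ha'⟩ := hα
  obtain ⟨b', hb'⟩ := hβ
  have hj : α + β = 2 * (a' + b' + 1) := by omega
  set j := a' + b' + 1 with hjdef
  have hw : (X 0 * X 1 : R3) ^ j * F ^ j ∈
      Pxy K ^ (α + β) ⊓ (Ideal.span {X 0 * X 1, F}) ^ (α + β) := by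
    rw [hj]
    exact w_mem j
  rw [← hEq] at hw
  have h0 := coeff_prod_zero hGP hFh hn ⟨a', ha'⟩ ⟨b', hb'⟩ hj _ hw
  rw [coeff_w hGP j] at h0
  exact pow_ne_zero _ (neg_ne_zero.2 (one_ne_zero)) h0

/-! ### facts about the specific F -/

set_option synthInstance.maxHeartbeats 1000000 in
theorem hGP_of (n : ℕ) (a b : Fin n → K) (F : R3)
    (hF : F = X 2 ^ n - ∏ i : Fin n, (X 2 - MvPolynomial.C (b i) * X 0)
        - ∏ i : Fin n, (X 2 - MvPolynomial.C (a i) * X 1)) :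
    F + X 2 ^ n ∈ Pxy K := by
  have hx0 : Ideal.Quotient.mk (Pxy K) (X 0) = 0 :=
    Ideal.Quotient.eq_zero_iff_mem.2 (Ideal.subset_span (by simp))
  have hx1 : Ideal.Quotient.mk (Pxy K) (X 1) = 0 :=
    Ideal.Quotient.eq_zero_iff_mem.2 (Ideal.subset_span (by simp))
  rw [← Ideal.Quotient.eq_zero_iff_mem, hF]
  rw [map_add, map_sub, map_sub, map_pow, map_prod, map_prod]
  simp only [map_sub, map_mul, map_pow, hx0, hx1, mul_zero, sub_zero]
  rw [Finset.prod_const, Finset.card_univ, Fintype.card_fin]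
  ring

theorem hFh_of (n : ℕ) (a b : Fin n → K) (F : R3)
    (hF : F = X 2 ^ n - ∏ i : Fin n, (X 2 - MvPolynomial.C (b i) * X 0)
        - ∏ i : Fin n, (X 2 - MvPolynomial.C (a i) * X 1)) :
    F.IsHomogeneous n := by
  rw [hF]
  have h1 : ((X 2 : R3) ^ n).IsHomogeneous n := isHomogeneous_X_pow 2 n
  have h2 : (∏ i : Fin n, ((X 2 : R3) - MvPolynomial.C (b i) * X 0)).IsHomogeneous n := by
    have := MvPolynomial.IsHomogeneous.prod Finset.univ
      (fun i : Fin n => (X 2 : R3) - MvPolynomial.C (b i) * X 0) (fun _ => 1)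
      (fun i _ => (isHomogeneous_X _ _).sub (isHomogeneous_C_mul_X (b i) 0))
    simpa using this
  have h3 : (∏ i : Fin n, ((X 2 : R3) - MvPolynomial.C (a i) * X 1)).IsHomogeneous n := by
    have := MvPolynomial.IsHomogeneous.prod Finset.univ
      (fun i : Fin n => (X 2 : R3) - MvPolynomial.C (a i) * X 1) (fun _ => 1)
      (fun i _ => (isHomogeneous_X _ _).sub (isHomogeneous_C_mul_X (a i) 1))
    simpa using this
  exact (h1.sub h2).sub h3

end NCI18

end

theorem stmt_18 {K : Type*} [Field K] (n : ℕ) (hn : 1 ≤ n)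
    (a b : Fin n → K) (ha : Function.Injective a) (hb : Function.Injective b)
    (ha0 : ∀ i, a i ≠ 0) (hb0 : ∀ i, b i ≠ 0)
    (F : MvPolynomial (Fin 3) K)
    (hF : F = X 2 ^ n - ∏ i : Fin n, (X 2 - MvPolynomial.C (b i) * X 0)
        - ∏ i : Fin n, (X 2 - MvPolynomial.C (a i) * X 1))
    (Isym : ℕ → Ideal (MvPolynomial (Fin 3) K))
    (hIsym : ∀ m, Isym m =
      Ideal.span {X 0, X 1} ^ m ⊓ Ideal.span {X 0 * X 1, F} ^ m)
    (α β : ℕ) (hα : 1 ≤ α) (hβ : 1 ≤ β) :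
    (Even α ∨ Even β → Isym (α + β) = Isym α * Isym β) ∧
      (Odd α ∧ Odd β → Isym α * Isym β < Isym (α + β)) := by
  have hGP : F + X 2 ^ n ∈ NCI18.Pxy K := NCI18.hGP_of n a b F hF
  have hFh : F.IsHomogeneous n := NCI18.hFh_of n a b F hF
  have hP : Ideal.span {(X 0 : MvPolynomial (Fin 3) K), X 1} = NCI18.Pxy K := rfl
  constructor
  · intro h
    rw [hIsym, hIsym, hIsym, hP]
    exact NCI18.even_case hGP h
  · rintro ⟨h1, h2⟩
    rw [hIsym, hIsym, hIsym, hP]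
    exact NCI18.odd_case hGP hFh hn h1 h2
end
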